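/- arXiv:2003.11311 — 7 statements merged into one kernel-verified Lean document; each statement's English description precedes it below -/
import Mathlib

section
/- Let μ : 𝔜 → ℂ be a finitely additive complex set function on the cylinder-set algebra 𝔜 of Ω, and equip Ω with the σ-algebra 𝔖 generated by 𝔜. Then μ admits a (necessarily unique) extension to a countably additive complex measure on 𝔖 if and only if μ is of bounded variation. -/
open MeasureTheory Filter Finset

attribute [local instance] Classical.propDecidable

noncomputable section

/-- A relation on ℕ representing a naturally labelled past-finite causal set:
a strict partial order `r` with `r i j → i < j`. -/
def CausalRel (r : ℕ → ℕ → Prop) : Prop :=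
  (∀ i, ¬ r i i) ∧ (∀ i j k, r i j → r j k → r i k) ∧ (∀ i j, r i j → i < j)

/-- Ω, the sample space of naturally labelled past-finite causal sets. -/
def Omega : Type := {r : ℕ → ℕ → Prop // CausalRel r}

/-- An `n`-node: a strict partial order on `Fin n` compatible with the labelling. -/
def IsNode {n : ℕ} (p : Fin n → Fin n → Prop) : Prop :=
  (∀ i, ¬ p i i) ∧ (∀ i j k, p i j → p j k → p i k) ∧
    (∀ i j : Fin n, p i j → (i : ℕ) < (j : ℕ))

/-- The cylinder set of an `n`-node. -/
def Cyl {n : ℕ} (p : Fin n → Fin n → Prop) : Set Omega :=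
  {r | ∀ i j : Fin n, r.1 i.1 j.1 ↔ p i j}

/-- The Boolean set algebra 𝔜 generated by the cylinder sets (and Ω itself) under
finite unions, intersections and complements. -/
inductive InAlg : Set Omega → Prop
  | basic {n : ℕ} (hn : 1 ≤ n) (p : Fin n → Fin n → Prop) (hp : IsNode p) : InAlg (Cyl p)
  | univ : InAlg Set.univ
  | compl (s : Set Omega) : InAlg s → InAlg sᶜ
  | union (s t : Set Omega) : InAlg s → InAlg t → InAlg (s ∪ t)

/-- Finite additivity of a complex set function on the algebra 𝔜. -/
def FinitelyAdditive (μ : Set Omega → ℂ) : Prop :=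
  ∀ s t : Set Omega, InAlg s → InAlg t → Disjoint s t → μ (s ∪ t) = μ s + μ t

/-- A finite partition of Ω into pairwise disjoint members of 𝔜. -/
def IsPartition (π : Finset (Set Omega)) : Prop :=
  (∀ s ∈ π, InAlg s) ∧ ((↑π : Set (Set Omega)).Pairwise Disjoint) ∧
    ⋃₀ (↑π : Set (Set Omega)) = Set.univ

/-- Bounded variation: the sums Σᵢ |μ(αᵢ)| over finite partitions of Ω into members
of 𝔜 are uniformly bounded. -/
def BoundedVariation (μ : Set Omega → ℂ) : Prop :=
  ∃ M : ℝ, ∀ π : Finset (Set Omega), IsPartition π → ∑ s ∈ π, ‖μ s‖ ≤ M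

/-- λ(a,b) = Σ_{k=b}^{a} C(a−b, k−b)·t_k. -/
def lam (t : ℕ → ℂ) (a b : ℕ) : ℂ :=
  ∑ k ∈ Finset.Icc b a, ((a - b).choose (k - b) : ℂ) * t k

/-- The maximal elements of a finite subset `I` with respect to the relation `c`. -/
def maxIn {n : ℕ} (c : Fin n → Fin n → Prop) (I : Finset (Fin n)) : Finset (Fin n) :=
  I.filter fun i => ∀ j ∈ I, ¬ c i j

/-- The past of the element `m` in the node `p`. -/
def pastOf {n : ℕ} (p : Fin n → Fin n → Prop) (m : Fin n) : Finset (Fin n) :=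
  Finset.univ.filter fun i => p i m

/-- The ℂSG amplitude of (the cylinder set of) an `n`-node:
∏_{m=1}^{n−1} λ(ϖ_m, μ_m)/λ(m,0). -/
def amp (t : ℕ → ℂ) {n : ℕ} (p : Fin n → Fin n → Prop) : ℂ :=
  ∏ m ∈ Finset.univ.filter (fun m : Fin n => 1 ≤ (m : ℕ)),
    lam t (pastOf p m).card (maxIn p (pastOf p m)).card / lam t (m : ℕ) 0

/-- μ is the ℂSG measure associated to the coupling constants t: it is finitely
additive on 𝔜 and takes the prescribed values on cylinder sets. -/
def IsCSG (t : ℕ → ℂ) (μ : Set Omega → ℂ) : Prop :=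
  FinitelyAdditive μ ∧
    ∀ (n : ℕ), 1 ≤ n → ∀ p : Fin n → Fin n → Prop, IsNode p → μ (Cyl p) = amp t p

/-- `I` is an order ideal (downward-closed set) of the relation `c`. -/
def isIdeal {n : ℕ} (c : Fin n → Fin n → Prop) (I : Finset (Fin n)) : Prop :=
  ∀ j ∈ I, ∀ i, c i j → i ∈ I

/-- Q(c) := Σ_{I an order ideal of c} |λ(|I|, m(I))|. -/
def Qval (t : ℕ → ℂ) {n : ℕ} (c : Fin n → Fin n → Prop) : ℝ :=
  ∑ I ∈ Finset.univ.filter (fun I : Finset (Fin n) => isIdeal c I),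
    ‖lam t I.card (maxIn c I).card‖

/-- ζ(c) := Q(c)/|λ(n,0)| − 1. -/
def zeta (t : ℕ → ℂ) {n : ℕ} (c : Fin n → Fin n → Prop) : ℝ :=
  Qval t c / ‖lam t n 0‖ - 1

/-- ζ_n^a := (Σ_{k=0}^{n} C(n,k)·|t_k|)/|λ(n,0)| − 1. -/
def zetaA (t : ℕ → ℂ) (n : ℕ) : ℝ :=
  (∑ k ∈ Finset.range (n + 1), (n.choose k : ℝ) * ‖t k‖) /
    ‖lam t n 0‖ - 1

/-- ζ_n^c := (|t_0| + Σ_{ϖ=1}^{n} |λ(ϖ,1)|)/|λ(n,0)| − 1. -/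
def zetaC (t : ℕ → ℂ) (n : ℕ) : ℝ :=
  (‖t 0‖ + ∑ w ∈ Finset.Icc 1 n, ‖lam t w 1‖) /
    ‖lam t n 0‖ - 1

/-- S_n := Σ_{p an n-node} |μ(Cyl(p))|. -/
def Svar (μ : Set Omega → ℂ) (n : ℕ) : ℝ :=
  ∑ p : {p : Fin n → Fin n → Prop // IsNode p}, ‖μ (Cyl p.1)‖

/-- The σ-algebra 𝔖 on Ω generated by the algebra 𝔜. -/
instance : MeasurableSpace Omega := MeasurableSpace.generateFrom {s | InAlg s}
/-! ### Auxiliary infrastructure -/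

section Aux

/-- Encode an element of Ω as a Boolean-valued matrix. -/
def omegaEnc (r : Omega) : ℕ → ℕ → Bool := fun i j => decide (r.1 i j)

lemma omegaEnc_injective : Function.Injective omegaEnc := by
  intro r s h
  apply Subtype.ext
  funext i j
  have := congrFun (congrFun h i) j
  simp only [omegaEnc, decide_eq_decide] at this
  exact propext this

instance : TopologicalSpace Omega := TopologicalSpace.induced omegaEnc inferInstance

lemma continuous_coord (i j : ℕ) : Continuous fun f : ℕ → ℕ → Bool => f i j :=
  (continuous_apply j).comp (continuous_apply i)

lemma isClopen_coord (i j : ℕ) (b : Bool) : IsClopen {f : ℕ → ℕ → Bool | f i j = b} :=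
  (isClopen_discrete {b}).preimage (continuous_coord i j)

lemma isClosed_range_omegaEnc : IsClosed (Set.range omegaEnc) := by
  have : Set.range omegaEnc =
      (⋂ i, {f : ℕ → ℕ → Bool | f i i = false}) ∩
      ((⋂ i, ⋂ j, ⋂ k, ({f : ℕ → ℕ → Bool | f i j = false} ∪
          ({f | f j k = false} ∪ {f | f i k = true}))) ∩
       (⋂ i, ⋂ j, if i < j then Set.univ else {f : ℕ → ℕ → Bool | f i j = false})) := by
    ext f
    simp only [Set.mem_inter_iff, Set.mem_iInter, Set.mem_union, Set.mem_setOf_eq]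
    constructor
    · rintro ⟨r, rfl⟩
      refine ⟨fun i => by simpa [omegaEnc] using r.2.1 i, fun i j k => ?_, fun i j => ?_⟩
      · simp only [omegaEnc, decide_eq_true_eq, decide_eq_false_iff_not]
        by_cases hij : r.1 i j
        · by_cases hjk : r.1 j k
          · exact Or.inr (Or.inr (r.2.2.1 i j k hij hjk))
          · exact Or.inr (Or.inl hjk)
        · exact Or.inl hij
      · by_cases hlt : i < j
        · simp [hlt]
        · simp only [hlt, if_false, Set.mem_setOf_eq, omegaEnc, decide_eq_false_iff_not]
          exact fun h => hlt (r.2.2.2 i j h)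
    · rintro ⟨h1, h2, h3⟩
      have h2' : ∀ i j k, f i j = true → f j k = true → f i k = true := by
        intro i j k hij hjk
        rcases h2 i j k with h | h | h
        · rw [hij] at h; exact absurd h (by simp)
        · rw [hjk] at h; exact absurd h (by simp)
        · exact h
      have h3' : ∀ i j, f i j = true → i < j := by
        intro i j hij
        by_contra hlt
        have := h3 i j
        rw [if_neg hlt, Set.mem_setOf_eq, hij] at this
        exact absurd this (by simp)
      refine ⟨⟨fun i j => f i j = true, fun i => by simp [h1 i], h2', h3'⟩, ?_⟩
      funext i j
      simp [omegaEnc]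
  rw [this]
  refine IsClosed.inter (isClosed_iInter fun i => (isClopen_coord i i false).isClosed)
    (IsClosed.inter ?_ ?_)
  · refine isClosed_iInter fun i => isClosed_iInter fun j => isClosed_iInter fun k => ?_
    exact ((isClopen_coord i j false).union
      ((isClopen_coord j k false).union (isClopen_coord i k true))).isClosed
  · refine isClosed_iInter fun i => isClosed_iInter fun j => ?_
    split
    · exact isClosed_univ
    · exact (isClopen_coord i j false).isClosed

lemma isInducing_omegaEnc : Topology.IsInducing omegaEnc := ⟨rfl⟩

instance : CompactSpace Omega := by
  constructor
  have : (Set.univ : Set Omega) = omegaEnc ⁻¹' (Set.range omegaEnc) := by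
    simp [Set.preimage_range]
  rw [this]
  exact isInducing_omegaEnc.isCompact_preimage isClosed_range_omegaEnc
    isClosed_range_omegaEnc.isCompact

/-- Every set in the algebra 𝔜 is clopen. -/
lemma InAlg.isClopen {s : Set Omega} (hs : InAlg s) : IsClopen s := by
  induction hs with
  | @basic n hn p hp =>
    have : Cyl p = omegaEnc ⁻¹'
        (⋂ i : Fin n, ⋂ j : Fin n, {f : ℕ → ℕ → Bool | f i.1 j.1 = decide (p i j)}) := by
      ext r
      simp only [Cyl, Set.mem_setOf_eq, Set.mem_preimage, Set.mem_iInter, omegaEnc,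
        decide_eq_decide]
    rw [this]
    refine IsClopen.preimage ?_ isInducing_omegaEnc.continuous
    exact isClopen_iInter_of_finite fun i => isClopen_iInter_of_finite fun j =>
      isClopen_coord i.1 j.1 (decide (p i j))
  | univ => exact isClopen_univ
  | compl s _ ih => exact ih.compl
  | union s t _ _ ihs iht => exact ihs.union iht

end Aux
section Alg

lemma InAlg.empty : InAlg (∅ : Set Omega) := by
  simpa using InAlg.compl _ InAlg.univ

lemma InAlg.inter {s t : Set Omega} (hs : InAlg s) (ht : InAlg t) : InAlg (s ∩ t) := by
  have : s ∩ t = (sᶜ ∪ tᶜ)ᶜ := by rw [Set.compl_union, compl_compl, compl_compl]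
  rw [this]
  exact InAlg.compl _ (InAlg.union _ _ (InAlg.compl _ hs) (InAlg.compl _ ht))

lemma InAlg.diff {s t : Set Omega} (hs : InAlg s) (ht : InAlg t) : InAlg (s \ t) :=
  hs.inter (InAlg.compl _ ht)

lemma InAlg.measurableSet {s : Set Omega} (hs : InAlg s) : MeasurableSet s :=
  MeasurableSpace.measurableSet_generateFrom hs

lemma InAlg.finsetUnion {ι : Type*} (F : Finset ι) (f : ι → Set Omega)
    (hf : ∀ i ∈ F, InAlg (f i)) : InAlg (⋃ i ∈ F, f i) := by
  classical
  induction F using Finset.induction with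
  | empty => simpa using InAlg.empty
  | @insert a F ha ih =>
    rw [Finset.set_biUnion_insert]
    exact InAlg.union _ _ (hf a (Finset.mem_insert_self a F))
      (ih fun i hi => hf i (Finset.mem_insert_of_mem hi))

/-- Key compactness fact: a countable cover of an algebra set by algebra sets has a
finite subcover. -/
lemma exists_finite_subcover {s : Set Omega} (hs : InAlg s) (f : ℕ → Set Omega)
    (hf : ∀ i, InAlg (f i)) (hcov : s ⊆ ⋃ i, f i) :
    ∃ F : Finset ℕ, s ⊆ ⋃ i ∈ F, f i := by
  have hcpt : IsCompact s := hs.isClopen.isClosed.isCompact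
  exact hcpt.elim_finite_subcover f (fun i => (hf i).isClopen.isOpen) hcov

end Alg
section Extension

/-- A nonnegative additive set function on the algebra extends to a measure. -/
lemma exists_measure_extension (τ : Set Omega → ℝ)
    (hadd : ∀ s t, InAlg s → InAlg t → Disjoint s t → τ (s ∪ t) = τ s + τ t)
    (hnn : ∀ s, InAlg s → 0 ≤ τ s) :
    ∃ m : Measure Omega, IsFiniteMeasure m ∧
      ∀ s, InAlg s → m s = ENNReal.ofReal (τ s) := by
  classical
  have hτ0 : τ ∅ = 0 := by
    have := hadd ∅ ∅ InAlg.empty InAlg.empty (by simp)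
    simp at this
    linarith
  have hmono : ∀ s t, InAlg s → InAlg t → s ⊆ t → τ s ≤ τ t := by
    intro s t hs ht hst
    have h1 : t = s ∪ (t \ s) := by rw [Set.union_diff_cancel hst]
    have h2 : τ t = τ s + τ (t \ s) := by
      conv_lhs => rw [h1]
      exact hadd _ _ hs (ht.diff hs) Set.disjoint_sdiff_right
    have := hnn (t \ s) (ht.diff hs)
    linarith
  have hsubadd : ∀ (F : Finset ℕ) (f : ℕ → Set Omega), (∀ i ∈ F, InAlg (f i)) →
      τ (⋃ i ∈ F, f i) ≤ ∑ i ∈ F, τ (f i) := by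
    intro F
    induction F using Finset.induction with
    | empty => intro f _; simp [hτ0]
    | @insert a F ha ih =>
      intro f hf
      have hfa : InAlg (f a) := hf a (Finset.mem_insert_self a F)
      have hF : InAlg (⋃ i ∈ F, f i) :=
        InAlg.finsetUnion F f fun i hi => hf i (Finset.mem_insert_of_mem hi)
      rw [Finset.set_biUnion_insert, Finset.sum_insert ha]
      have h1 : f a ∪ ⋃ i ∈ F, f i = f a ∪ ((⋃ i ∈ F, f i) \ f a) := by
        rw [Set.union_diff_self]
      have h2 : τ (f a ∪ ⋃ i ∈ F, f i) = τ (f a) + τ ((⋃ i ∈ F, f i) \ f a) := by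
        rw [h1]
        exact hadd _ _ hfa (hF.diff hfa) Set.disjoint_sdiff_right
      have h3 : τ ((⋃ i ∈ F, f i) \ f a) ≤ τ (⋃ i ∈ F, f i) :=
        hmono _ _ (hF.diff hfa) hF Set.diff_subset
      have h4 := ih f fun i hi => hf i (Finset.mem_insert_of_mem hi)
      linarith
  -- the content, extended by ⊤ off the algebra
  set m' : Set Omega → ENNReal := fun u => if InAlg u then ENNReal.ofReal (τ u) else ⊤ with hm'
  have hm'empty : m' ∅ = 0 := by simp [hm', InAlg.empty, hτ0]
  have hσ : ∀ s, InAlg s → ∀ f : ℕ → Set Omega, s ⊆ ⋃ i, f i →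
      ENNReal.ofReal (τ s) ≤ ∑' i, m' (f i) := by
    intro s hs f hcov
    by_cases hall : ∀ i, InAlg (f i)
    · obtain ⟨F, hF⟩ := exists_finite_subcover hs f hall hcov
      calc ENNReal.ofReal (τ s) ≤ ENNReal.ofReal (τ (⋃ i ∈ F, f i)) :=
            ENNReal.ofReal_le_ofReal
              (hmono _ _ hs (InAlg.finsetUnion F f fun i _ => hall i) hF)
        _ ≤ ENNReal.ofReal (∑ i ∈ F, τ (f i)) :=
            ENNReal.ofReal_le_ofReal (hsubadd F f fun i _ => hall i)
        _ = ∑ i ∈ F, ENNReal.ofReal (τ (f i)) :=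
            ENNReal.ofReal_sum_of_nonneg fun i _ => hnn _ (hall i)
        _ = ∑ i ∈ F, m' (f i) := by
            refine Finset.sum_congr rfl fun i _ => ?_
            simp [hm', hall i]
        _ ≤ ∑' i, m' (f i) := ENNReal.sum_le_tsum F
    · push_neg at hall
      obtain ⟨i, hi⟩ := hall
      have : m' (f i) = ⊤ := by simp [hm', hi]
      calc ENNReal.ofReal (τ s) ≤ ⊤ := le_top
        _ = m' (f i) := this.symm
        _ ≤ ∑' j, m' (f j) := ENNReal.le_tsum i
  set θ := MeasureTheory.OuterMeasure.ofFunction m' hm'empty with hθ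
  have hθ_eq : ∀ s, InAlg s → θ s = ENNReal.ofReal (τ s) := by
    intro s hs
    refine le_antisymm ?_ ?_
    · calc θ s ≤ m' s := MeasureTheory.OuterMeasure.ofFunction_le s
        _ = ENNReal.ofReal (τ s) := by simp [hm', hs]
    · rw [hθ, MeasureTheory.OuterMeasure.ofFunction_apply]
      exact le_iInf fun f => le_iInf fun hf => hσ s hs f hf
  have hcar : ∀ s, InAlg s → MeasurableSet[θ.caratheodory] s := by
    intro s hs
    apply MeasureTheory.OuterMeasure.ofFunction_caratheodory
    intro t
    by_cases ht : InAlg t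
    · have h1 : InAlg (t ∩ s) := ht.inter hs
      have h2 : InAlg (t \ s) := ht.diff hs
      have h3 : τ (t ∩ s) + τ (t \ s) = τ t := by
        rw [← hadd _ _ h1 h2 (Set.disjoint_sdiff_right.mono_left Set.inter_subset_right),
          Set.inter_union_diff]
      simp only [hm', if_pos ht, if_pos h1, if_pos h2]
      rw [← ENNReal.ofReal_add (hnn _ h1) (hnn _ h2), h3]
    · simp [hm', ht]
  have hle : (inferInstance : MeasurableSpace Omega) ≤ θ.caratheodory := by
    refine MeasurableSpace.generateFrom_le ?_
    exact fun s hs => hcar s hs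
  refine ⟨θ.toMeasure hle, ?_, ?_⟩
  · constructor
    rw [MeasureTheory.toMeasure_apply _ _ MeasurableSet.univ,
      hθ_eq _ InAlg.univ]
    exact ENNReal.ofReal_lt_top
  · intro s hs
    rw [MeasureTheory.toMeasure_apply _ _ hs.measurableSet, hθ_eq _ hs]

end Extension
section Variation

/-- Partitions of an algebra set into nonempty algebra pieces. -/
def PartOf (s : Set Omega) (π : Finset (Set Omega)) : Prop :=
  (∀ a ∈ π, InAlg a) ∧ (↑π : Set (Set Omega)).Pairwise Disjoint ∧
    ⋃₀ (↑π : Set (Set Omega)) = s ∧ (∅ : Set Omega) ∉ π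

def varSums (μ : Set Omega → ℂ) (s : Set Omega) : Set ℝ :=
  {x | ∃ π, PartOf s π ∧ x = ∑ a ∈ π, ‖μ a‖}

/-- The variation of μ over the algebra subsets of s. -/
def var (μ : Set Omega → ℂ) (s : Set Omega) : ℝ := sSup (varSums μ s)

lemma PartOf.subset {s : Set Omega} {π : Finset (Set Omega)} (hπ : PartOf s π)
    {a : Set Omega} (ha : a ∈ π) : a ⊆ s := by
  rw [← hπ.2.2.1]
  exact Set.subset_sUnion_of_mem ha

lemma varSums_nonempty (μ : Set Omega → ℂ) {s : Set Omega} (hs : InAlg s) :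
    (varSums μ s).Nonempty := by
  classical
  by_cases h : s = ∅
  · exact ⟨0, ∅, ⟨by simp, by simp, by simp [h], by simp⟩, by simp⟩
  · refine ⟨‖μ s‖, {s}, ⟨?_, ?_, ?_, ?_⟩, by simp⟩
    · simpa using hs
    · simp [Set.pairwise_singleton]
    · simp
    · simpa using fun hc => h hc.symm

lemma varSums_le {μ : Set Omega → ℂ} {M : ℝ}
    (hM : ∀ π : Finset (Set Omega), IsPartition π → ∑ a ∈ π, ‖μ a‖ ≤ M)
    {s : Set Omega} (hs : InAlg s) {x : ℝ} (hx : x ∈ varSums μ s) : x ≤ M := by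
  classical
  obtain ⟨π, hπ, rfl⟩ := hx
  have hsc : sᶜ ∉ π := by
    intro hc
    have h1 : sᶜ ⊆ s := hπ.subset hc
    have h2 : sᶜ = ∅ := by
      rw [Set.eq_empty_iff_forall_notMem]
      exact fun x hx => hx (h1 hx)
    exact hπ.2.2.2 (h2 ▸ hc)
  have hpart : IsPartition (insert sᶜ π) := by
    refine ⟨?_, ?_, ?_⟩
    · intro a ha
      rcases Finset.mem_insert.mp ha with rfl | ha
      · exact InAlg.compl _ hs
      · exact hπ.1 a ha
    · rw [Finset.coe_insert]
      refine Set.pairwise_insert_of_symmetric.mpr ⟨hπ.2.1, ?_⟩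
      intro b hb _
      exact Set.disjoint_left.mpr fun x hx hxb => hx (hπ.subset hb hxb)
    · rw [Finset.coe_insert, Set.sUnion_insert, hπ.2.2.1, Set.compl_union_self]
  calc ∑ a ∈ π, ‖μ a‖
      ≤ ‖μ sᶜ‖ + ∑ a ∈ π, ‖μ a‖ :=
        le_add_of_nonneg_left (by positivity)
    _ = ∑ a ∈ insert sᶜ π, ‖μ a‖ := by rw [Finset.sum_insert hsc]
    _ ≤ M := hM _ hpart

lemma bddAbove_varSums {μ : Set Omega → ℂ} {M : ℝ}
    (hM : ∀ π : Finset (Set Omega), IsPartition π → ∑ a ∈ π, ‖μ a‖ ≤ M)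
    {s : Set Omega} (hs : InAlg s) : BddAbove (varSums μ s) :=
  ⟨M, fun _ hx => varSums_le hM hs hx⟩

lemma mu_empty {μ : Set Omega → ℂ} (hμ : FinitelyAdditive μ) : μ ∅ = 0 := by
  have := hμ ∅ ∅ InAlg.empty InAlg.empty (by simp)
  simpa using this
lemma var_empty (μ : Set Omega → ℂ) : var μ ∅ = 0 := by
  have : varSums μ ∅ = {0} := by
    ext x
    constructor
    · rintro ⟨π, hπ, rfl⟩
      have : π = ∅ := by
        rw [Finset.eq_empty_iff_forall_notMem]
        intro a ha
        have h1 : a ⊆ ∅ := hπ.subset ha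
        have : a = ∅ := Set.subset_empty_iff.mp h1
        exact hπ.2.2.2 (this ▸ ha)
      simp [this]
    · rintro rfl
      exact ⟨∅, ⟨by simp, by simp, by simp, by simp⟩, by simp⟩
  rw [var, this, csSup_singleton]

lemma abs_le_var {μ : Set Omega → ℂ} (hμ : FinitelyAdditive μ) {M : ℝ}
    (hM : ∀ π : Finset (Set Omega), IsPartition π → ∑ a ∈ π, ‖μ a‖ ≤ M)
    {s : Set Omega} (hs : InAlg s) : ‖μ s‖ ≤ var μ s := by
  by_cases h : s = ∅
  · subst h
    rw [var_empty, mu_empty hμ]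
    simp
  · refine le_csSup (bddAbove_varSums hM hs) ?_
    exact ⟨{s}, ⟨by simpa using hs, by simp [Set.pairwise_singleton], by simp,
      by simpa using fun hc => h hc.symm⟩, by simp⟩

lemma var_nonneg {μ : Set Omega → ℂ} (hμ : FinitelyAdditive μ) {M : ℝ}
    (hM : ∀ π : Finset (Set Omega), IsPartition π → ∑ a ∈ π, ‖μ a‖ ≤ M)
    {s : Set Omega} (hs : InAlg s) : 0 ≤ var μ s :=
  le_trans (by positivity) (abs_le_var hμ hM hs)

/-- Key refinement lemma: intersecting a partition of `u` with an algebra subset `s ⊆ u`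
gives at most `var μ s`. -/
lemma sum_inter_le_var {μ : Set Omega → ℂ} (hμ : FinitelyAdditive μ) {M : ℝ}
    (hM : ∀ π : Finset (Set Omega), IsPartition π → ∑ a ∈ π, ‖μ a‖ ≤ M)
    {s u : Set Omega} (hs : InAlg s) (hsu : s ⊆ u) {π : Finset (Set Omega)}
    (hπ : PartOf u π) : ∑ a ∈ π, ‖μ (a ∩ s)‖ ≤ var μ s := by
  classical
  set πs : Finset (Set Omega) := (π.image (· ∩ s)).erase ∅ with hπs
  set πf : Finset (Set Omega) := π.filter (fun a => a ∩ s ≠ ∅) with hπf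
  have himg : πf.image (· ∩ s) = πs := by
    ext b
    simp only [hπs, hπf, Finset.mem_erase, Finset.mem_image, Finset.mem_filter]
    constructor
    · rintro ⟨a, ⟨ha, hne⟩, rfl⟩
      exact ⟨hne, a, ha, rfl⟩
    · rintro ⟨hne, a, ha, rfl⟩
      exact ⟨a, ⟨ha, hne⟩, rfl⟩
  have hinj : Set.InjOn (· ∩ s) πf := by
    intro a ha b hb hab
    by_contra hne
    have hd : Disjoint a b := hπ.2.1 (Finset.mem_coe.mpr (Finset.mem_filter.mp ha).1)
      (Finset.mem_coe.mpr (Finset.mem_filter.mp hb).1) hne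
    have h1 : a ∩ s ⊆ a := Set.inter_subset_left
    have h2 : a ∩ s ⊆ b := by
      have heq : a ∩ s = b ∩ s := hab
      rw [heq]; exact Set.inter_subset_left
    have : a ∩ s = ∅ := by
      rw [Set.eq_empty_iff_forall_notMem]
      intro x hx
      exact Set.disjoint_left.mp hd (h1 hx) (h2 hx)
    exact (Finset.mem_filter.mp ha).2 this
  have hsum : ∑ a ∈ π, ‖μ (a ∩ s)‖ = ∑ b ∈ πs, ‖μ b‖ := by
    rw [← himg, Finset.sum_image hinj]
    rw [← Finset.sum_filter_add_sum_filter_not π (fun a => a ∩ s ≠ ∅)]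
    have : ∑ a ∈ π.filter (fun a => ¬ a ∩ s ≠ ∅), ‖μ (a ∩ s)‖ = 0 := by
      refine Finset.sum_eq_zero fun a ha => ?_
      have : a ∩ s = ∅ := not_not.mp (Finset.mem_filter.mp ha).2
      rw [this, mu_empty hμ]
      simp
    rw [this, add_zero]
  have hpart : PartOf s πs := by
    refine ⟨?_, ?_, ?_, ?_⟩
    · intro b hb
      obtain ⟨a, ha, rfl⟩ := Finset.mem_image.mp (Finset.mem_of_mem_erase hb)
      exact (hπ.1 a ha).inter hs
    · intro b hb c hc hbc
      obtain ⟨a, ha, rfl⟩ := Finset.mem_image.mp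
        (Finset.mem_of_mem_erase (Finset.mem_coe.mp hb))
      obtain ⟨a', ha', rfl⟩ := Finset.mem_image.mp
        (Finset.mem_of_mem_erase (Finset.mem_coe.mp hc))
      have hne : a ≠ a' := fun h => hbc (by rw [h])
      exact (hπ.2.1 (Finset.mem_coe.mpr ha) (Finset.mem_coe.mpr ha') hne).mono
        Set.inter_subset_left Set.inter_subset_left
    · have h1 : ⋃₀ (↑πs : Set (Set Omega)) = ⋃₀ ((fun a => a ∩ s) '' ↑π) := by
        rw [hπs, Finset.coe_erase, Finset.coe_image]
        rw [Set.sUnion_diff_singleton_empty]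
      rw [h1, Set.sUnion_image]
      have : ⋃ a ∈ (↑π : Set (Set Omega)), a ∩ s = (⋃₀ (↑π : Set (Set Omega))) ∩ s := by
        rw [Set.sUnion_eq_biUnion, Set.iUnion₂_inter]
      rw [this, hπ.2.2.1, Set.inter_eq_right.mpr hsu]
    · simp [hπs]
  rw [hsum]
  exact le_csSup (bddAbove_varSums hM hs) ⟨πs, hpart, rfl⟩
lemma var_add {μ : Set Omega → ℂ} (hμ : FinitelyAdditive μ) {M : ℝ}
    (hM : ∀ π : Finset (Set Omega), IsPartition π → ∑ a ∈ π, ‖μ a‖ ≤ M)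
    {s t : Set Omega} (hs : InAlg s) (ht : InAlg t) (hst : Disjoint s t) :
    var μ (s ∪ t) = var μ s + var μ t := by
  classical
  have hst' : InAlg (s ∪ t) := InAlg.union _ _ hs ht
  have hne_s := varSums_nonempty μ hs
  have hne_t := varSums_nonempty μ ht
  have hne_u := varSums_nonempty μ hst'
  refine le_antisymm ?_ ?_
  · -- ≤ : refine a partition of s ∪ t
    refine csSup_le hne_u ?_
    rintro x ⟨π, hπ, rfl⟩
    have hsplit : ∀ a ∈ π, ‖μ a‖ ≤
        ‖μ (a ∩ s)‖ + ‖μ (a ∩ t)‖ := by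
      intro a ha
      have hsub : a ⊆ s ∪ t := hπ.subset ha
      have heq : a = (a ∩ s) ∪ (a ∩ t) := by
        rw [← Set.inter_union_distrib_left, Set.inter_eq_left.mpr hsub]
      have hd : Disjoint (a ∩ s) (a ∩ t) :=
        hst.mono Set.inter_subset_right Set.inter_subset_right
      have := hμ (a ∩ s) (a ∩ t) ((hπ.1 a ha).inter hs) ((hπ.1 a ha).inter ht) hd
      calc ‖μ a‖ = ‖μ (a ∩ s) + μ (a ∩ t)‖ := by rw [← this, ← heq]
        _ ≤ ‖μ (a ∩ s)‖ + ‖μ (a ∩ t)‖ := norm_add_le _ _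
    calc ∑ a ∈ π, ‖μ a‖
        ≤ ∑ a ∈ π, (‖μ (a ∩ s)‖ + ‖μ (a ∩ t)‖) :=
          Finset.sum_le_sum hsplit
      _ = ∑ a ∈ π, ‖μ (a ∩ s)‖ + ∑ a ∈ π, ‖μ (a ∩ t)‖ :=
          Finset.sum_add_distrib
      _ ≤ var μ s + var μ t :=
          add_le_add (sum_inter_le_var hμ hM hs Set.subset_union_left hπ)
            (sum_inter_le_var hμ hM ht Set.subset_union_right hπ)
  · -- ≥ : combine partitions
    have key : ∀ x ∈ varSums μ s, ∀ y ∈ varSums μ t, x + y ∈ varSums μ (s ∪ t) := by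
      rintro x ⟨πs, hπs, rfl⟩ y ⟨πt, hπt, rfl⟩
      have hdisj : Disjoint πs πt := by
        rw [Finset.disjoint_left]
        intro a ha hat
        have h1 : a ⊆ s := hπs.subset ha
        have h2 : a ⊆ t := hπt.subset hat
        have : a = ∅ := by
          rw [Set.eq_empty_iff_forall_notMem]
          exact fun x hx => Set.disjoint_left.mp hst (h1 hx) (h2 hx)
        exact hπs.2.2.2 (this ▸ ha)
      refine ⟨πs ∪ πt, ⟨?_, ?_, ?_, ?_⟩, (Finset.sum_union hdisj).symm⟩
      · intro a ha
        rcases Finset.mem_union.mp ha with ha | ha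
        · exact hπs.1 a ha
        · exact hπt.1 a ha
      · intro a ha b hb hab
        rw [Finset.coe_union, Set.mem_union] at ha hb
        rcases ha with ha | ha <;> rcases hb with hb | hb
        · exact hπs.2.1 ha hb hab
        · exact hst.mono (hπs.subset ha) (hπt.subset hb)
        · exact (hst.mono (hπs.subset hb) (hπt.subset ha)).symm
        · exact hπt.2.1 ha hb hab
      · rw [Finset.coe_union, Set.sUnion_union, hπs.2.2.1, hπt.2.2.1]
      · rw [Finset.mem_union]
        rintro (h | h)
        · exact hπs.2.2.2 h
        · exact hπt.2.2.2 h
    have hb := bddAbove_varSums hM hst'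
    have h1 : var μ s ≤ var μ (s ∪ t) - var μ t := by
      refine csSup_le hne_s fun x hx => ?_
      have h2 : var μ t ≤ var μ (s ∪ t) - x := by
        refine csSup_le hne_t fun y hy => ?_
        have : x + y ≤ var μ (s ∪ t) := le_csSup hb (key x hx y hy)
        linarith
      linarith
    linarith
end Variation

section Main

/-- Construction of the extension from bounded variation. -/
lemma exists_extension {μ : Set Omega → ℂ} (hμ : FinitelyAdditive μ)
    (hBV : BoundedVariation μ) :
    ∃ ν : MeasureTheory.VectorMeasure Omega ℂ, ∀ s : Set Omega, InAlg s → ν s = μ s := by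
  obtain ⟨M, hM⟩ := hBV
  have hre : ∀ s, InAlg s → |(μ s).re| ≤ var μ s := fun s hs =>
    le_trans (Complex.abs_re_le_norm (μ s)) (abs_le_var hμ hM hs)
  have him : ∀ s, InAlg s → |(μ s).im| ≤ var μ s := fun s hs =>
    le_trans (Complex.abs_im_le_norm (μ s)) (abs_le_var hμ hM hs)
  -- the four nonnegative additive parts
  set τ₁ : Set Omega → ℝ := fun s => (var μ s + (μ s).re) / 2 with hτ₁
  set τ₂ : Set Omega → ℝ := fun s => (var μ s - (μ s).re) / 2 with hτ₂
  set τ₃ : Set Omega → ℝ := fun s => (var μ s + (μ s).im) / 2 with hτ₃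
  set τ₄ : Set Omega → ℝ := fun s => (var μ s - (μ s).im) / 2 with hτ₄
  have hadd : ∀ s t, InAlg s → InAlg t → Disjoint s t →
      var μ (s ∪ t) = var μ s + var μ t ∧ μ (s ∪ t) = μ s + μ t := fun s t hs ht hst =>
    ⟨var_add hμ hM hs ht hst, hμ s t hs ht hst⟩
  have key : ∀ τ : Set Omega → ℝ,
      (∀ s t, InAlg s → InAlg t → Disjoint s t → τ (s ∪ t) = τ s + τ t) →
      (∀ s, InAlg s → 0 ≤ τ s) →
      ∃ σ : MeasureTheory.SignedMeasure Omega, ∀ s, InAlg s → σ s = τ s := by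
    intro τ h1 h2
    obtain ⟨m, hfin, hm⟩ := exists_measure_extension τ h1 h2
    haveI := hfin
    refine ⟨m.toSignedMeasure, fun s hs => ?_⟩
    rw [MeasureTheory.Measure.toSignedMeasure_apply_measurable hs.measurableSet, measureReal_def, hm s hs,
      ENNReal.toReal_ofReal (h2 s hs)]
  have haddre : ∀ s t, InAlg s → InAlg t → Disjoint s t →
      (μ (s ∪ t)).re = (μ s).re + (μ t).re := by
    intro s t hs ht hst
    have h2 := congrArg Complex.re (hadd s t hs ht hst).2
    simpa using h2
  have haddim : ∀ s t, InAlg s → InAlg t → Disjoint s t →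
      (μ (s ∪ t)).im = (μ s).im + (μ t).im := by
    intro s t hs ht hst
    have h2 := congrArg Complex.im (hadd s t hs ht hst).2
    simpa using h2
  obtain ⟨σ₁, hm₁⟩ := key τ₁
    (fun s t hs ht hst => by
      simp only [hτ₁]
      rw [(hadd s t hs ht hst).1, haddre s t hs ht hst]; ring)
    (fun s hs => by
      simp only [hτ₁]
      have := abs_le.mp (hre s hs)
      linarith)
  obtain ⟨σ₂, hm₂⟩ := key τ₂
    (fun s t hs ht hst => by
      simp only [hτ₂]
      rw [(hadd s t hs ht hst).1, haddre s t hs ht hst]; ring)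
    (fun s hs => by
      simp only [hτ₂]
      have := abs_le.mp (hre s hs)
      linarith)
  obtain ⟨σ₃, hm₃⟩ := key τ₃
    (fun s t hs ht hst => by
      simp only [hτ₃]
      rw [(hadd s t hs ht hst).1, haddim s t hs ht hst]; ring)
    (fun s hs => by
      simp only [hτ₃]
      have := abs_le.mp (him s hs)
      linarith)
  obtain ⟨σ₄, hm₄⟩ := key τ₄
    (fun s t hs ht hst => by
      simp only [hτ₄]
      rw [(hadd s t hs ht hst).1, haddim s t hs ht hst]; ring)
    (fun s hs => by
      simp only [hτ₄]
      have := abs_le.mp (him s hs)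
      linarith)
  refine ⟨(σ₁ - σ₂).toComplexMeasure (σ₃ - σ₄), fun s hs => ?_⟩
  rw [MeasureTheory.SignedMeasure.toComplexMeasure_apply]
  have h1 : (σ₁ - σ₂) s = (μ s).re := by
    rw [MeasureTheory.VectorMeasure.sub_apply, hm₁ s hs, hm₂ s hs]
    simp only [hτ₁, hτ₂]
    ring
  have h2 : (σ₃ - σ₄) s = (μ s).im := by
    rw [MeasureTheory.VectorMeasure.sub_apply, hm₃ s hs, hm₄ s hs]
    simp only [hτ₃, hτ₄]
    ring
  rw [h1, h2]


/-- Forward direction: an extension forces bounded variation. -/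
lemma bv_of_extension {μ : Set Omega → ℂ} (ν : MeasureTheory.VectorMeasure Omega ℂ)
    (hν : ∀ s : Set Omega, InAlg s → ν s = μ s) : BoundedVariation μ := by
  classical
  set jr := (MeasureTheory.ComplexMeasure.re ν).toJordanDecomposition with hjr
  set ji := (MeasureTheory.ComplexMeasure.im ν).toJordanDecomposition with hji
  refine ⟨(jr.posPart Set.univ).toReal + (jr.negPart Set.univ).toReal +
    (ji.posPart Set.univ).toReal + (ji.negPart Set.univ).toReal, ?_⟩
  intro π hπ
  -- pointwise bound
  have hbound : ∀ a ∈ π, ‖μ a‖ ≤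
      (jr.posPart a).toReal + (jr.negPart a).toReal +
      ((ji.posPart a).toReal + (ji.negPart a).toReal) := by
    intro a ha
    have hma : MeasurableSet a := (hπ.1 a ha).measurableSet
    have h1 : (μ a).re = (jr.posPart a).toReal - (jr.negPart a).toReal := by
      have := MeasureTheory.SignedMeasure.toSignedMeasure_toJordanDecomposition
        (MeasureTheory.ComplexMeasure.re ν)
      have h2 : (MeasureTheory.ComplexMeasure.re ν) a = (μ a).re := by
        rw [show (MeasureTheory.ComplexMeasure.re ν) a = (ν a).re from rfl,
          hν a (hπ.1 a ha)]
      rw [← h2, ← this, MeasureTheory.JordanDecomposition.toSignedMeasure,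
        MeasureTheory.VectorMeasure.sub_apply,
        MeasureTheory.Measure.toSignedMeasure_apply_measurable hma,
        MeasureTheory.Measure.toSignedMeasure_apply_measurable hma, measureReal_def, measureReal_def]
    have h1' : (μ a).im = (ji.posPart a).toReal - (ji.negPart a).toReal := by
      have := MeasureTheory.SignedMeasure.toSignedMeasure_toJordanDecomposition
        (MeasureTheory.ComplexMeasure.im ν)
      have h2 : (MeasureTheory.ComplexMeasure.im ν) a = (μ a).im := by
        rw [show (MeasureTheory.ComplexMeasure.im ν) a = (ν a).im from rfl,
          hν a (hπ.1 a ha)]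
      rw [← h2, ← this, MeasureTheory.JordanDecomposition.toSignedMeasure,
        MeasureTheory.VectorMeasure.sub_apply,
        MeasureTheory.Measure.toSignedMeasure_apply_measurable hma,
        MeasureTheory.Measure.toSignedMeasure_apply_measurable hma, measureReal_def, measureReal_def]
    calc ‖μ a‖ ≤ |(μ a).re| + |(μ a).im| :=
          Complex.norm_le_abs_re_add_abs_im (μ a)
      _ ≤ ((jr.posPart a).toReal + (jr.negPart a).toReal) +
          ((ji.posPart a).toReal + (ji.negPart a).toReal) := by
          rw [h1, h1']
          have p1 : (0:ℝ) ≤ (jr.posPart a).toReal := ENNReal.toReal_nonneg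
          have p2 : (0:ℝ) ≤ (jr.negPart a).toReal := ENNReal.toReal_nonneg
          have p3 : (0:ℝ) ≤ (ji.posPart a).toReal := ENNReal.toReal_nonneg
          have p4 : (0:ℝ) ≤ (ji.negPart a).toReal := ENNReal.toReal_nonneg
          have e1 : |(jr.posPart a).toReal - (jr.negPart a).toReal| ≤
              (jr.posPart a).toReal + (jr.negPart a).toReal :=
            abs_le.mpr ⟨by linarith, by linarith⟩
          have e2 : |(ji.posPart a).toReal - (ji.negPart a).toReal| ≤
              (ji.posPart a).toReal + (ji.negPart a).toReal :=
            abs_le.mpr ⟨by linarith, by linarith⟩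
          exact add_le_add e1 e2
      _ = _ := by ring
  -- sum each measure over the partition
  have hsum : ∀ m : Measure Omega, IsFiniteMeasure m →
      ∑ a ∈ π, (m a).toReal ≤ (m Set.univ).toReal := by
    intro m hfin
    haveI := hfin
    have hdisj : (↑π : Set (Set Omega)).PairwiseDisjoint id := hπ.2.1
    have h1 : ∑ a ∈ π, m a = m (⋃ a ∈ π, a) :=
      (MeasureTheory.measure_biUnion_finset hdisj fun a ha =>
        (hπ.1 a ha).measurableSet).symm
    have h2 : (⋃ a ∈ π, a) = Set.univ := by
      rw [← Finset.set_biUnion_coe, ← Set.sUnion_eq_biUnion, hπ.2.2]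
    have h3 : ∑ a ∈ π, (m a).toReal = (m (⋃ a ∈ π, a)).toReal := by
      rw [← h1, ENNReal.toReal_sum]
      exact fun a _ => MeasureTheory.measure_ne_top m a
    rw [h3, h2]
  calc ∑ a ∈ π, ‖μ a‖
      ≤ ∑ a ∈ π, ((jr.posPart a).toReal + (jr.negPart a).toReal +
        ((ji.posPart a).toReal + (ji.negPart a).toReal)) := Finset.sum_le_sum hbound
    _ = ∑ a ∈ π, (jr.posPart a).toReal + ∑ a ∈ π, (jr.negPart a).toReal +
        (∑ a ∈ π, (ji.posPart a).toReal + ∑ a ∈ π, (ji.negPart a).toReal) := by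
        simp [Finset.sum_add_distrib]
    _ ≤ _ := by
        have h1 := hsum jr.posPart inferInstance
        have h2 := hsum jr.negPart inferInstance
        have h3 := hsum ji.posPart inferInstance
        have h4 := hsum ji.negPart inferInstance
        linarith
/-- Uniqueness of the extension. -/
lemma ext_unique (ν₁ ν₂ : MeasureTheory.VectorMeasure Omega ℂ)
    (h : ∀ s : Set Omega, InAlg s → ν₁ s = ν₂ s) : ν₁ = ν₂ := by
  refine MeasureTheory.VectorMeasure.ext fun t ht => ?_
  have hpi : IsPiSystem {s : Set Omega | InAlg s} :=
    fun s hs t ht _ => hs.inter ht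
  refine MeasurableSpace.induction_on_inter (C := fun t _ => ν₁ t = ν₂ t)
    (rfl) hpi ?_ (fun t ht => h t ht) ?_ ?_ t ht
  · simp
  · intro t htm hC
    have huniv : ν₁ Set.univ = ν₂ Set.univ := h Set.univ InAlg.univ
    have e1 : ν₁ (t ∪ tᶜ) = ν₁ t + ν₁ tᶜ :=
      MeasureTheory.VectorMeasure.of_union disjoint_compl_right htm htm.compl
    have e2 : ν₂ (t ∪ tᶜ) = ν₂ t + ν₂ tᶜ :=
      MeasureTheory.VectorMeasure.of_union disjoint_compl_right htm htm.compl
    rw [Set.union_compl_self] at e1 e2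
    have : ν₁ t + ν₁ tᶜ = ν₂ t + ν₂ tᶜ := by rw [← e1, ← e2, huniv]
    rw [hC] at this
    exact add_left_cancel this
  · intro f hdisj hmeas hC
    have h1 := MeasureTheory.VectorMeasure.hasSum_of_disjoint_iUnion
      (v := ν₁) hmeas hdisj
    have h2 := MeasureTheory.VectorMeasure.hasSum_of_disjoint_iUnion
      (v := ν₂) hmeas hdisj
    have : (fun i => ν₁ (f i)) = fun i => ν₂ (f i) := funext hC
    rw [this] at h1
    exact h1.unique h2

end Main

/-- a finitely additive complex set function on 𝔜 admits a (necessarily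
unique) extension to a countably additive complex measure on 𝔖 iff it is of bounded
variation. -/
theorem statement_0 (μ : Set Omega → ℂ) (hμ : FinitelyAdditive μ) :
    ((∃ ν : MeasureTheory.VectorMeasure Omega ℂ,
        ∀ s : Set Omega, InAlg s → ν s = μ s) ↔ BoundedVariation μ) ∧
    (∀ ν₁ ν₂ : MeasureTheory.VectorMeasure Omega ℂ,
        (∀ s : Set Omega, InAlg s → ν₁ s = μ s) →
        (∀ s : Set Omega, InAlg s → ν₂ s = μ s) → ν₁ = ν₂) := by
  refine ⟨⟨fun h => ?_, fun hBV => exists_extension hμ hBV⟩, ?_⟩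
  · obtain ⟨ν, hν⟩ := h
    exact bv_of_extension ν hν
  · intro ν₁ ν₂ h1 h2
    exact ext_unique ν₁ ν₂ fun s hs => (h1 s hs).trans (h2 s hs).symm

end
end

section
/- Call two elements r, r′ of Ω order-isomorphic if there is a bijection f : ℕ → ℕ such that r i j ↔ r′ (f i) (f j) for all i, j ∈ ℕ; a subset α ⊆ Ω is covariant if whenever c ∈ α and c′ is order-isomorphic to c then c′ ∈ α. Then the only covariant members of the cylinder-set algebra 𝔜 are ∅ and Ω. -/
open MeasureTheory Filter Finset

attribute [local instance] Classical.propDecidable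

noncomputable section

/-- Two elements of Ω are order-isomorphic if some bijection of ℕ carries one
relation to the other. -/
def OrderIsoRel (c c' : Omega) : Prop :=
  ∃ f : ℕ → ℕ, Function.Bijective f ∧ ∀ i j : ℕ, c.1 i j ↔ c'.1 (f i) (f j)

/-- A covariant subset of Ω: closed under order isomorphism. -/
def CovariantSet (α : Set Omega) : Prop :=
  ∀ c ∈ α, ∀ c' : Omega, OrderIsoRel c c' → c' ∈ α

/-! ### Auxiliary machinery for statement 1 -/

/-- Embedding of the "first" factor: identity below `n`, even offsets above. -/
def phiA (n i : ℕ) : ℕ := if i < n then i else n + 2 * (i - n)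

/-- Embedding of the "second" factor: odd offsets above `n`. -/
def phiB (n j : ℕ) : ℕ := n + 2 * j + 1

lemma phiA_strictMono (n : ℕ) {i j : ℕ} (h : i < j) : phiA n i < phiA n j := by
  unfold phiA; split <;> split <;> omega

lemma phiB_strictMono (n : ℕ) {i j : ℕ} (h : i < j) : phiB n i < phiB n j := by
  unfold phiB; omega

lemma phiA_inj (n : ℕ) {i j : ℕ} (h : phiA n i = phiA n j) : i = j := by
  unfold phiA at h; split at h <;> split at h <;> omega

lemma phiB_inj (n : ℕ) {i j : ℕ} (h : phiB n i = phiB n j) : i = j := by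
  unfold phiB at h; omega

lemma phiA_ne_phiB (n i j : ℕ) : phiA n i ≠ phiB n j := by
  unfold phiA phiB; split <;> omega

/-- Interleaved disjoint union of two relations, with the first `n` elements of
`c` occupying the first `n` labels. -/
def mixRel (n : ℕ) (c d : ℕ → ℕ → Prop) : ℕ → ℕ → Prop :=
  fun a b => (∃ i j, c i j ∧ a = phiA n i ∧ b = phiA n j) ∨
    (∃ i j, d i j ∧ a = phiB n i ∧ b = phiB n j)

lemma mixRel_causal (n : ℕ) {c d : ℕ → ℕ → Prop} (hc : CausalRel c) (hd : CausalRel d) :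
    CausalRel (mixRel n c d) := by
  obtain ⟨hc1, hc2, hc3⟩ := hc
  obtain ⟨hd1, hd2, hd3⟩ := hd
  refine ⟨?_, ?_, ?_⟩
  · rintro a (⟨i, j, hij, h1, h2⟩ | ⟨i, j, hij, h1, h2⟩)
    · cases phiA_inj n (h1 ▸ h2 : phiA n i = phiA n j); exact hc1 _ hij
    · cases phiB_inj n (h1 ▸ h2 : phiB n i = phiB n j); exact hd1 _ hij
  · rintro a b e (⟨i, j, hij, h1, h2⟩ | ⟨i, j, hij, h1, h2⟩)
        (⟨i', j', hij', h1', h2'⟩ | ⟨i', j', hij', h1', h2'⟩)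
    · cases phiA_inj n (h2.symm.trans h1')
      exact Or.inl ⟨i, j', hc2 _ _ _ hij hij', h1, h2'⟩
    · exact absurd (h2.symm.trans h1') (phiA_ne_phiB n j i')
    · exact absurd (h1'.symm.trans h2) (phiA_ne_phiB n i' j)
    · cases phiB_inj n (h2.symm.trans h1')
      exact Or.inr ⟨i, j', hd2 _ _ _ hij hij', h1, h2'⟩
  · rintro a b (⟨i, j, hij, h1, h2⟩ | ⟨i, j, hij, h1, h2⟩)
    · rw [h1, h2]; exact phiA_strictMono n (hc3 _ _ hij)
    · rw [h1, h2]; exact phiB_strictMono n (hd3 _ _ hij)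

lemma mixRel_prefix (n : ℕ) (c d : ℕ → ℕ → Prop) {i j : ℕ} (hi : i < n) (hj : j < n) :
    mixRel n c d i j ↔ c i j := by
  constructor
  · rintro (⟨i', j', hij, h1, h2⟩ | ⟨i', j', hij, h1, h2⟩)
    · have hi' : i' = i := by unfold phiA at h1; split at h1 <;> omega
      have hj' : j' = j := by unfold phiA at h2; split at h2 <;> omega
      rwa [hi', hj'] at hij
    · exfalso; unfold phiB at h1; omega
  · intro h
    exact Or.inl ⟨i, j, h, by unfold phiA; simp [hi], by unfold phiA; simp [hj]⟩

/-- The relabelling that swaps the two factors of `mixRel`. -/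
def swapMap (n a : ℕ) : ℕ :=
  if a < n then phiB n a
  else if (a - n) % 2 = 0 then phiB n (n + (a - n) / 2)
  else phiA n ((a - n) / 2)

lemma swapMap_phiA (n i : ℕ) : swapMap n (phiA n i) = phiB n i := by
  unfold swapMap phiA phiB
  split_ifs <;> omega

lemma swapMap_phiB (n j : ℕ) : swapMap n (phiB n j) = phiA n j := by
  unfold swapMap phiA phiB
  split_ifs <;> omega

lemma swapMap_cases (n a : ℕ) : (∃ i, a = phiA n i) ∨ (∃ j, a = phiB n j) := by
  by_cases h : a < n
  · exact Or.inl ⟨a, by unfold phiA; simp [h]⟩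
  · by_cases h2 : (a - n) % 2 = 0
    · refine Or.inl ⟨n + (a - n) / 2, ?_⟩
      unfold phiA; split <;> omega
    · refine Or.inr ⟨(a - n) / 2, ?_⟩
      unfold phiB; omega

lemma swapMap_involutive (n : ℕ) : Function.Involutive (swapMap n) := by
  intro a
  rcases swapMap_cases n a with ⟨i, rfl⟩ | ⟨j, rfl⟩
  · rw [swapMap_phiA, swapMap_phiB]
  · rw [swapMap_phiB, swapMap_phiA]

lemma mixRel_swap_fwd (n : ℕ) (c d : ℕ → ℕ → Prop) {a b : ℕ} (h : mixRel n c d a b) :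
    mixRel n d c (swapMap n a) (swapMap n b) := by
  rcases h with ⟨i, j, hij, rfl, rfl⟩ | ⟨i, j, hij, rfl, rfl⟩
  · rw [swapMap_phiA, swapMap_phiA]
    exact Or.inr ⟨i, j, hij, rfl, rfl⟩
  · rw [swapMap_phiB, swapMap_phiB]
    exact Or.inl ⟨i, j, hij, rfl, rfl⟩

/-- Every member of the algebra 𝔜 is determined by a finite prefix. -/
lemma InAlg.determined {α : Set Omega} (h : InAlg α) :
    ∃ n : ℕ, ∀ r r' : Omega,
      (∀ i j : ℕ, i < n → j < n → (r.1 i j ↔ r'.1 i j)) → (r ∈ α ↔ r' ∈ α) := by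
  induction h with
  | @basic n hn p hp =>
    refine ⟨n, fun r r' hagree => ?_⟩
    constructor
    · intro hr i j
      rw [← hagree i.1 j.1 i.2 j.2]; exact hr i j
    · intro hr i j
      rw [hagree i.1 j.1 i.2 j.2]; exact hr i j
  | univ => exact ⟨0, fun r r' _ => by simp⟩
  | compl s _ ih =>
    obtain ⟨n, hn⟩ := ih
    exact ⟨n, fun r r' hagree => by simpa using (hn r r' hagree).not⟩
  | union s t _ _ ihs iht =>
    obtain ⟨ns, hs⟩ := ihs
    obtain ⟨nt, ht⟩ := iht
    refine ⟨max ns nt, fun r r' hagree => ?_⟩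
    have h1 := hs r r' fun i j hi hj => hagree i j (lt_of_lt_of_le hi (le_max_left _ _))
      (lt_of_lt_of_le hj (le_max_left _ _))
    have h2 := ht r r' fun i j hi hj => hagree i j (lt_of_lt_of_le hi (le_max_right _ _))
      (lt_of_lt_of_le hj (le_max_right _ _))
    simp only [Set.mem_union]
    rw [h1, h2]

/-- the only covariant members of the cylinder-set algebra 𝔜 are ∅ and Ω. -/
theorem statement_1 (α : Set Omega) (hα : InAlg α) (hcov : CovariantSet α) :
    α = ∅ ∨ α = Set.univ := by
  by_cases hemp : α = ∅
  · exact Or.inl hemp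
  right
  obtain ⟨c, hc⟩ := Set.nonempty_iff_ne_empty.mpr hemp
  obtain ⟨n, hn⟩ := hα.determined
  ext d
  simp only [Set.mem_univ, iff_true]
  -- the two interleavings
  set e1 : Omega := ⟨mixRel n c.1 d.1, mixRel_causal n c.2 d.2⟩ with he1def
  set e2 : Omega := ⟨mixRel n d.1 c.1, mixRel_causal n d.2 c.2⟩ with he2def
  have he1 : e1 ∈ α := by
    rw [hn e1 c fun i j hi hj => mixRel_prefix n c.1 d.1 hi hj]
    exact hc
  have hiso : OrderIsoRel e1 e2 := by
    refine ⟨swapMap n, (swapMap_involutive n).bijective, fun i j => ?_⟩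
    constructor
    · exact mixRel_swap_fwd n c.1 d.1
    · intro h
      have := mixRel_swap_fwd n d.1 c.1 h
      rwa [swapMap_involutive n, swapMap_involutive n] at this
  have he2 : e2 ∈ α := hcov e1 he1 e2 hiso
  rw [← hn e2 d fun i j hi hj => mixRel_prefix n d.1 c.1 hi hj]
  exact he2

end
end

section
/- Let μ_v be the ℂSG measure associated to the coupling constants t. For each n ≥ 1 set ζ_n^max := max ζ(p) and ζ_n^min := min ζ(p), the maximum and minimum being taken over all n-nodes p. If the series Σ_{n≥1} ζ_n^max converges, then μ_v is of bounded variation; if the series Σ_{n≥1} ζ_n^min diverges, then μ_v is not of bounded variation. -/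
open MeasureTheory Filter Finset

attribute [local instance] Classical.propDecidable

noncomputable section

namespace S4

/-- Restriction of an element of Ω to the first `n` labels. -/
def resRel (r : Omega) (n : ℕ) : Fin n → Fin n → Prop := fun i j => r.1 i.1 j.1

lemma resRel_isNode (r : Omega) (n : ℕ) : IsNode (resRel r n) :=
  ⟨fun i => r.2.1 i.1, fun _ _ _ h h' => r.2.2.1 _ _ _ h h', fun _ _ h => r.2.2.2 _ _ h⟩

lemma mem_cyl_iff {n : ℕ} {p : Fin n → Fin n → Prop} (r : Omega) :
    r ∈ Cyl p ↔ resRel r n = p := by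
  constructor
  · intro h; funext i j; exact propext (h i j)
  · intro h i j; rw [← h]; exact Iff.rfl

/-- The canonical extension of a node to an element of Ω. -/
def toOmega {n : ℕ} (p : Fin n → Fin n → Prop) (hp : IsNode p) : Omega :=
  ⟨fun i j => ∃ hi : i < n, ∃ hj : j < n, p ⟨i, hi⟩ ⟨j, hj⟩, by
    refine ⟨?_, ?_, ?_⟩
    · rintro i ⟨hi, hj, h⟩; exact hp.1 _ h
    · rintro i j k ⟨hi, hj, h⟩ ⟨hj', hk, h'⟩
      exact ⟨hi, hk, hp.2.1 _ _ _ h h'⟩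
    · rintro i j ⟨hi, hj, h⟩; exact hp.2.2 _ _ h⟩

lemma resRel_toOmega {n : ℕ} (p : Fin n → Fin n → Prop) (hp : IsNode p) :
    resRel (toOmega p hp) n = p := by
  funext i j
  apply propext
  constructor
  · rintro ⟨hi, hj, h⟩; exact h
  · intro h; exact ⟨i.2, j.2, h⟩

lemma toOmega_mem_cyl {n : ℕ} (p : Fin n → Fin n → Prop) (hp : IsNode p) :
    toOmega p hp ∈ Cyl p := (mem_cyl_iff _).2 (resRel_toOmega p hp)

/-- The type of n-nodes. -/
abbrev Node (n : ℕ) := {p : Fin n → Fin n → Prop // IsNode p}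

lemma cyl_disjoint {n : ℕ} {p q : Node n} (h : p ≠ q) : Disjoint (Cyl p.1) (Cyl q.1) := by
  rw [Set.disjoint_left]
  intro r hr hr'
  rw [mem_cyl_iff] at hr hr'
  exact h (Subtype.ext (hr ▸ hr'))

lemma cyl_injective {n : ℕ} : Function.Injective (fun p : Node n => Cyl p.1) := by
  intro p q h
  have h' : Cyl p.1 = Cyl q.1 := h
  have := toOmega_mem_cyl p.1 p.2
  rw [h'] at this
  rw [mem_cyl_iff, resRel_toOmega] at this
  exact Subtype.ext this

lemma mem_cyl_res (r : Omega) (n : ℕ) : r ∈ Cyl (resRel r n) := (mem_cyl_iff r).2 rfl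

lemma cyl_union_univ (n : ℕ) : ⋃ p : Node n, Cyl p.1 = Set.univ := by
  ext r
  simp only [Set.mem_iUnion, Set.mem_univ, iff_true]
  exact ⟨⟨resRel r n, resRel_isNode r n⟩, mem_cyl_res r n⟩

end S4
namespace S4

/-- `s` is determined by the first `n` labels. -/
def Det (n : ℕ) (s : Set Omega) : Prop :=
  ∀ r r' : Omega, resRel r n = resRel r' n → (r ∈ s ↔ r' ∈ s)

lemma det_mono {n m : ℕ} (hnm : n ≤ m) {s : Set Omega} (h : Det n s) : Det m s := by
  intro r r' hres
  apply h
  funext i j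
  have : (⟨i.1, lt_of_lt_of_le i.2 hnm⟩ : Fin m).1 = i.1 := rfl
  exact congrFun (congrFun hres ⟨i.1, lt_of_lt_of_le i.2 hnm⟩) ⟨j.1, lt_of_lt_of_le j.2 hnm⟩

lemma inAlg_det {s : Set Omega} (h : InAlg s) : ∃ n, 1 ≤ n ∧ Det n s := by
  induction h with
  | @basic n hn p hp =>
    exact ⟨n, hn, fun r r' hres => by rw [mem_cyl_iff, mem_cyl_iff, hres]⟩
  | univ => exact ⟨1, le_refl 1, fun r r' _ => Iff.rfl⟩
  | compl s _ ih =>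
    obtain ⟨n, hn, hd⟩ := ih
    exact ⟨n, hn, fun r r' hres => not_congr (hd r r' hres)⟩
  | union s u _ _ ihs ihu =>
    obtain ⟨n, hn, hds⟩ := ihs
    obtain ⟨m, hm, hdu⟩ := ihu
    exact ⟨max n m, le_trans hn (le_max_left _ _),
      fun r r' hres => or_congr
        (det_mono (le_max_left _ _) hds r r' hres)
        (det_mono (le_max_right _ _) hdu r r' hres)⟩

lemma inAlg_empty : InAlg (∅ : Set Omega) := by
  have := InAlg.compl _ InAlg.univ
  rwa [Set.compl_univ] at this

lemma mu_empty {μ : Set Omega → ℂ} (hμ : FinitelyAdditive μ) : μ ∅ = 0 := by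
  have := hμ ∅ ∅ inAlg_empty inAlg_empty (disjoint_bot_left)
  rw [Set.union_empty] at this
  exact (left_eq_add.mp this)

lemma inAlg_biUnion_cyl {n : ℕ} (hn : 1 ≤ n) (T : Finset (Node n)) :
    InAlg (⋃ p ∈ T, Cyl p.1) := by
  induction T using Finset.induction with
  | empty => simpa using inAlg_empty
  | insert _ _ _ ih =>
    rw [Finset.set_biUnion_insert]
    exact InAlg.union _ _ (InAlg.basic hn _ (by exact Subtype.prop _)) ih

lemma mu_biUnion_cyl {μ : Set Omega → ℂ} (hμ : FinitelyAdditive μ) {n : ℕ} (hn : 1 ≤ n)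
    (T : Finset (Node n)) : μ (⋃ p ∈ T, Cyl p.1) = ∑ p ∈ T, μ (Cyl p.1) := by
  induction T using Finset.induction with
  | empty => simpa using mu_empty hμ
  | @insert a T ha ih =>
    rw [Finset.set_biUnion_insert, hμ _ _ (InAlg.basic hn _ a.2) (inAlg_biUnion_cyl hn T)
      ?_, ih, Finset.sum_insert ha]
    rw [Set.disjoint_iUnion_right]
    intro p
    rw [Set.disjoint_iUnion_right]
    intro hp
    exact cyl_disjoint (fun h => ha (h ▸ hp))

/-- The set of n-nodes whose canonical representative lies in `s`. -/
def nodesOf (n : ℕ) (s : Set Omega) : Finset (Node n) :=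
  Finset.univ.filter (fun p => toOmega p.1 p.2 ∈ s)

lemma det_eq_biUnion {n : ℕ} {s : Set Omega} (hd : Det n s) :
    s = ⋃ p ∈ nodesOf n s, Cyl p.1 := by
  ext r
  simp only [Set.mem_iUnion, nodesOf, Finset.mem_filter, Finset.mem_univ, true_and]
  constructor
  · intro hr
    refine ⟨⟨resRel r n, resRel_isNode r n⟩, ?_, mem_cyl_res r n⟩
    exact (hd r _ (by rw [resRel_toOmega])).1 hr
  · rintro ⟨p, hps, hrp⟩
    rw [mem_cyl_iff] at hrp
    exact (hd r (toOmega p.1 p.2) (by rw [hrp, resRel_toOmega])).2 hps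

lemma mu_det {μ : Set Omega → ℂ} (hμ : FinitelyAdditive μ) {n : ℕ} (hn : 1 ≤ n)
    {s : Set Omega} (hd : Det n s) : μ s = ∑ p ∈ nodesOf n s, μ (Cyl p.1) := by
  conv_lhs => rw [det_eq_biUnion hd]
  exact mu_biUnion_cyl hμ hn _

end S4
namespace S4

lemma lam_shift (t : ℕ → ℂ) (b d : ℕ) :
    lam t (b + d) b = ∑ j ∈ Finset.range (d + 1), (d.choose j : ℂ) * t (b + j) := by
  unfold lam
  rw [show Finset.Icc b (b + d) = Finset.Ico b (b + d + 1) by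
    rw [Finset.Ico_add_one_right_eq_Icc]]
  rw [Finset.sum_Ico_eq_sum_range]
  rw [show b + d + 1 - b = d + 1 by omega]
  refine Finset.sum_congr rfl (fun j hj => ?_)
  rw [show b + d - b = d by omega, show b + j - b = j by omega]

lemma lam_card (t : ℕ → ℂ) {α : Type*} [DecidableEq α] {M I : Finset α} (h : M ⊆ I) :
    lam t I.card M.card = ∑ A ∈ I.powerset.filter (fun A => M ⊆ A), t A.card := by
  have key : ∑ A ∈ I.powerset.filter (fun A => M ⊆ A), t A.card
      = ∑ B ∈ (I \ M).powerset, t (M.card + B.card) := by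
    refine Finset.sum_nbij' (fun A => A \ M) (fun B => M ∪ B) ?_ ?_ ?_ ?_ ?_
    · intro A hA
      simp only [Finset.mem_filter, Finset.mem_powerset] at hA ⊢
      exact Finset.sdiff_subset_sdiff hA.1 (le_refl _)
    · intro B hB
      simp only [Finset.mem_filter, Finset.mem_powerset] at hB ⊢
      constructor
      · exact Finset.union_subset h (hB.trans (Finset.sdiff_subset))
      · exact Finset.subset_union_left
    · intro A hA
      simp only [Finset.mem_filter, Finset.mem_powerset] at hA
      exact Finset.union_sdiff_of_subset hA.2
    · intro B hB
      simp only [Finset.mem_powerset] at hB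
      exact Finset.union_sdiff_cancel_left (Finset.sdiff_disjoint.mono_left hB).symm
    · intro A hA
      simp only [Finset.mem_filter, Finset.mem_powerset] at hA
      congr 1
      have := Finset.card_le_card hA.2
      rw [Finset.card_sdiff_of_subset hA.2]
      omega
  have hcard : I.card = M.card + (I \ M).card := by
    have := Finset.card_le_card h
    rw [Finset.card_sdiff_of_subset h]; omega
  rw [key, Finset.sum_powerset, hcard, lam_shift]
  apply Finset.sum_congr rfl
  intro j hj
  rw [Finset.sum_congr rfl (fun B hB => by
    rw [(Finset.mem_powersetCard.1 hB).2]), Finset.sum_const, Finset.card_powersetCard,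
    nsmul_eq_mul]

/-- Downward closure of a finite set. -/
def dc {n : ℕ} (c : Fin n → Fin n → Prop) (A : Finset (Fin n)) : Finset (Fin n) :=
  Finset.univ.filter (fun i => i ∈ A ∨ ∃ j ∈ A, c i j)

variable {n : ℕ} {c : Fin n → Fin n → Prop}

lemma subset_dc (A : Finset (Fin n)) : A ⊆ dc c A := fun i hi => by
  simp [dc, hi]

lemma isIdeal_dc (hc : IsNode c) (A : Finset (Fin n)) : isIdeal c (dc c A) := by
  intro j hj i hij
  simp only [dc, Finset.mem_filter, Finset.mem_univ, true_and] at hj ⊢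
  rcases hj with hj | ⟨k, hk, hjk⟩
  · exact Or.inr ⟨j, hj, hij⟩
  · exact Or.inr ⟨k, hk, hc.2.1 _ _ _ hij hjk⟩

lemma maxIn_dc_subset (A : Finset (Fin n)) : maxIn c (dc c A) ⊆ A := by
  intro x hx
  simp only [maxIn, Finset.mem_filter] at hx
  obtain ⟨hxd, hmax⟩ := hx
  have hxd' := hxd
  simp only [dc, Finset.mem_filter, Finset.mem_univ, true_and] at hxd'
  rcases hxd' with h | ⟨j, hj, hxj⟩
  · exact h
  · exact absurd hxj (hmax j (subset_dc A hj))

lemma exists_maxIn (hc : IsNode c) (I : Finset (Fin n)) {x : Fin n} (hx : x ∈ I) :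
    ∃ y ∈ maxIn c I, x = y ∨ c x y := by
  have hne : (I.filter (fun y => x = y ∨ c x y)).Nonempty := ⟨x, by simp [hx]⟩
  obtain ⟨y, hy, hmax⟩ := Finset.exists_max_image
    (I.filter (fun y => x = y ∨ c x y)) (fun y => (y : ℕ)) hne
  simp only [Finset.mem_filter] at hy
  refine ⟨y, ?_, hy.2⟩
  simp only [maxIn, Finset.mem_filter]
  refine ⟨hy.1, fun z hz hyz => ?_⟩
  have hzf : z ∈ I.filter (fun y => x = y ∨ c x y) := by
    simp only [Finset.mem_filter]
    refine ⟨hz, ?_⟩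
    rcases hy.2 with rfl | hxy
    · exact Or.inr hyz
    · exact Or.inr (hc.2.1 _ _ _ hxy hyz)
  have := hmax z hzf
  have := hc.2.2 _ _ hyz
  omega

lemma dc_eq_of_ideal (hc : IsNode c) {I A : Finset (Fin n)} (hI : isIdeal c I)
    (hMA : maxIn c I ⊆ A) (hAI : A ⊆ I) : dc c A = I := by
  apply Finset.Subset.antisymm
  · intro i hi
    simp only [dc, Finset.mem_filter, Finset.mem_univ, true_and] at hi
    rcases hi with hi | ⟨j, hj, hij⟩
    · exact hAI hi
    · exact hI j (hAI hj) i hij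
  · intro x hx
    obtain ⟨y, hy, hxy⟩ := exists_maxIn hc I hx
    simp only [dc, Finset.mem_filter, Finset.mem_univ, true_and]
    rcases hxy with rfl | hxy
    · exact Or.inl (hMA hy)
    · exact Or.inr ⟨y, hMA hy, hxy⟩

lemma sum_ideal_lam (t : ℕ → ℂ) (hc : IsNode c) :
    ∑ I ∈ Finset.univ.filter (fun I : Finset (Fin n) => isIdeal c I),
      lam t I.card (maxIn c I).card = lam t n 0 := by
  have hmaxsub : ∀ I : Finset (Fin n), maxIn c I ⊆ I := fun I => Finset.filter_subset _ _
  calc ∑ I ∈ Finset.univ.filter (fun I : Finset (Fin n) => isIdeal c I),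
        lam t I.card (maxIn c I).card
      = ∑ I ∈ Finset.univ.filter (fun I : Finset (Fin n) => isIdeal c I),
        ∑ A ∈ I.powerset.filter (fun A => maxIn c I ⊆ A), t A.card := by
        exact Finset.sum_congr rfl (fun I _ => lam_card t (hmaxsub I))
    _ = ∑ x ∈ (Finset.univ.filter (fun I : Finset (Fin n) => isIdeal c I)).sigma
          (fun I => I.powerset.filter (fun A => maxIn c I ⊆ A)), t x.2.card := by
        rw [Finset.sum_sigma]
    _ = ∑ A ∈ (Finset.univ : Finset (Fin n)).powerset, t A.card := by
        refine Finset.sum_nbij' (fun x => x.2) (fun A => ⟨dc c A, A⟩) ?_ ?_ ?_ ?_ ?_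
        · intro a _
          simp
        · intro A _
          simp only [Finset.mem_sigma, Finset.mem_filter, Finset.mem_univ, true_and,
            Finset.mem_powerset]
          exact ⟨isIdeal_dc hc A, subset_dc A, maxIn_dc_subset A⟩
        · rintro ⟨I, A⟩ ha
          simp only [Finset.mem_sigma, Finset.mem_filter, Finset.mem_univ, true_and,
            Finset.mem_powerset] at ha
          obtain ⟨hI, hAI, hMA⟩ := ha
          have h := dc_eq_of_ideal hc hI hMA hAI
          subst h
          rfl
        · intro A _
          rfl
        · intro a _
          rfl
    _ = lam t (Finset.univ : Finset (Fin n)).card (∅ : Finset (Fin n)).card := by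
        rw [lam_card t (Finset.empty_subset _)]
        apply Finset.sum_congr _ (fun _ _ => rfl)
        simp
    _ = lam t n 0 := by simp

end S4
namespace S4

variable {n : ℕ}

/-- Extend an `n`-node by a new top label whose past is the ideal `I`. -/
def extNode (p : Fin n → Fin n → Prop) (I : Finset (Fin n)) :
    Fin (n + 1) → Fin (n + 1) → Prop := fun i j =>
  (∃ hi : (i : ℕ) < n, ∃ hj : (j : ℕ) < n, p ⟨i, hi⟩ ⟨j, hj⟩) ∨
    ((j : ℕ) = n ∧ ∃ hi : (i : ℕ) < n, (⟨i, hi⟩ : Fin n) ∈ I)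

lemma isNode_extNode {p : Fin n → Fin n → Prop} (hp : IsNode p) {I : Finset (Fin n)}
    (hI : isIdeal p I) : IsNode (extNode p I) := by
  refine ⟨?_, ?_, ?_⟩
  · rintro i (⟨hi, hj, h⟩ | ⟨hj, hi, _⟩)
    · exact hp.1 _ h
    · omega
  · rintro i j k (⟨hi, hj, h⟩ | ⟨hj, hi, _⟩) (⟨hj', hk, h'⟩ | ⟨hk, hj', hjI⟩)
    · exact Or.inl ⟨hi, hk, hp.2.1 _ _ _ h h'⟩
    · exact Or.inr ⟨hk, hi, hI _ hjI _ h⟩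
    · omega
    · omega
  · rintro i j (⟨hi, hj, h⟩ | ⟨hj, hi, _⟩)
    · exact hp.2.2 _ _ h
    · omega

lemma extNode_castSucc {p : Fin n → Fin n → Prop} {I : Finset (Fin n)} (i j : Fin n) :
    extNode p I i.castSucc j.castSucc ↔ p i j := by
  constructor
  · rintro (⟨hi, hj, h⟩ | ⟨hj, -, -⟩)
    · exact h
    · exfalso; have := j.isLt; rw [Fin.coe_castSucc] at hj; omega
  · intro h
    exact Or.inl ⟨i.isLt, j.isLt, h⟩

lemma extNode_last {p : Fin n → Fin n → Prop} {I : Finset (Fin n)} (i : Fin n) :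
    extNode p I i.castSucc (Fin.last n) ↔ i ∈ I := by
  constructor
  · rintro (⟨-, hj, -⟩ | ⟨-, hi, h⟩)
    · exfalso; rw [Fin.val_last] at hj; omega
    · exact h
  · intro h
    exact Or.inr ⟨Fin.val_last n, i.isLt, h⟩

lemma not_extNode_last_left {p : Fin n → Fin n → Prop} {I : Finset (Fin n)} (j : Fin (n+1)) :
    ¬ extNode p I (Fin.last n) j := by
  rintro (⟨hi, -, -⟩ | ⟨-, hi, -⟩) <;> (rw [Fin.val_last] at hi; omega)

/-- Restriction of an `(n+1)`-node to the first `n` labels. -/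
def resNode (q : Fin (n + 1) → Fin (n + 1) → Prop) : Fin n → Fin n → Prop :=
  fun i j => q i.castSucc j.castSucc

/-- The past of the top label of an `(n+1)`-node, as a subset of `Fin n`. -/
def lastIdeal (q : Fin (n + 1) → Fin (n + 1) → Prop) : Finset (Fin n) :=
  Finset.univ.filter (fun i => q i.castSucc (Fin.last n))

lemma isNode_resNode {q : Fin (n + 1) → Fin (n + 1) → Prop} (hq : IsNode q) :
    IsNode (resNode q) :=
  ⟨fun i => hq.1 _, fun _ _ _ h h' => hq.2.1 _ _ _ h h', fun i j h => by
    have := hq.2.2 _ _ h; simpa using this⟩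

lemma isIdeal_lastIdeal {q : Fin (n + 1) → Fin (n + 1) → Prop} (hq : IsNode q) :
    isIdeal (resNode q) (lastIdeal q) := by
  intro j hj i hij
  simp only [lastIdeal, Finset.mem_filter, Finset.mem_univ, true_and] at hj ⊢
  exact hq.2.1 _ _ _ hij hj

lemma extNode_resNode {q : Fin (n + 1) → Fin (n + 1) → Prop} (hq : IsNode q) :
    extNode (resNode q) (lastIdeal q) = q := by
  funext i j
  apply propext
  by_cases hi : (i : ℕ) < n
  · by_cases hj : (j : ℕ) < n
    · have hi' : i = (⟨i, hi⟩ : Fin n).castSucc := Fin.ext rfl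
      have hj' : j = (⟨j, hj⟩ : Fin n).castSucc := Fin.ext rfl
      rw [hi', hj', extNode_castSucc]
      exact Iff.rfl
    · have hj' : j = Fin.last n := Fin.ext (by rw [Fin.val_last]; have := j.isLt; omega)
      have hi' : i = (⟨i, hi⟩ : Fin n).castSucc := Fin.ext rfl
      rw [hi', hj', extNode_last]
      simp [lastIdeal]
  · have hi' : i = Fin.last n := Fin.ext (by rw [Fin.val_last]; have := i.isLt; omega)
    rw [hi']
    simp only [not_extNode_last_left, false_iff]
    intro h
    have := hq.2.2 _ _ h
    have h2 := j.isLt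
    rw [Fin.val_last] at this
    omega

lemma resNode_extNode {p : Fin n → Fin n → Prop} {I : Finset (Fin n)} :
    resNode (extNode p I) = p := by
  funext i j
  exact propext (extNode_castSucc i j)

lemma lastIdeal_extNode {p : Fin n → Fin n → Prop} {I : Finset (Fin n)} :
    lastIdeal (extNode p I) = I := by
  ext i
  simp only [lastIdeal, Finset.mem_filter, Finset.mem_univ, true_and]
  exact extNode_last i

end S4
namespace S4

variable {n : ℕ} {p : Fin n → Fin n → Prop} {I : Finset (Fin n)}

lemma extNode_to_castSucc {i : Fin (n + 1)} {m : Fin n} :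
    extNode p I i m.castSucc ↔ ∃ hi : (i : ℕ) < n, p ⟨i, hi⟩ m := by
  constructor
  · rintro (⟨hi, hj, h⟩ | ⟨hj, -, -⟩)
    · exact ⟨hi, h⟩
    · exfalso; have := m.isLt; rw [Fin.coe_castSucc] at hj; omega
  · rintro ⟨hi, h⟩
    exact Or.inl ⟨hi, m.isLt, h⟩

lemma extNode_to_last {i : Fin (n + 1)} :
    extNode p I i (Fin.last n) ↔ ∃ hi : (i : ℕ) < n, (⟨i, hi⟩ : Fin n) ∈ I := by
  constructor
  · rintro (⟨-, hj, -⟩ | ⟨-, hi, h⟩)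
    · exfalso; rw [Fin.val_last] at hj; omega
    · exact ⟨hi, h⟩
  · rintro ⟨hi, h⟩
    exact Or.inr ⟨Fin.val_last n, hi, h⟩

lemma pastOf_ext_castSucc (m : Fin n) :
    pastOf (extNode p I) m.castSucc = (pastOf p m).map Fin.castSuccEmb := by
  ext i
  simp only [pastOf, Finset.mem_filter, Finset.mem_univ, true_and, Finset.mem_map]
  rw [extNode_to_castSucc]
  constructor
  · rintro ⟨hi, h⟩
    exact ⟨⟨i, hi⟩, h, Fin.ext rfl⟩
  · rintro ⟨i', hi', rfl⟩
    exact ⟨i'.isLt, hi'⟩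

lemma pastOf_ext_last :
    pastOf (extNode p I) (Fin.last n) = I.map Fin.castSuccEmb := by
  ext i
  simp only [pastOf, Finset.mem_filter, Finset.mem_univ, true_and, Finset.mem_map]
  rw [extNode_to_last]
  constructor
  · rintro ⟨hi, h⟩
    exact ⟨⟨i, hi⟩, h, Fin.ext rfl⟩
  · rintro ⟨i', hi', rfl⟩
    exact ⟨i'.isLt, hi'⟩

lemma maxIn_map (S : Finset (Fin n)) :
    maxIn (extNode p I) (S.map Fin.castSuccEmb) = (maxIn p S).map Fin.castSuccEmb := by
  ext i
  simp only [maxIn, Finset.mem_filter, Finset.mem_map]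
  constructor
  · rintro ⟨⟨i', hi', rfl⟩, hmax⟩
    refine ⟨i', ⟨hi', fun j hj hcij => ?_⟩, rfl⟩
    exact hmax j.castSucc ⟨j, hj, rfl⟩ ((extNode_castSucc i' j).2 hcij)
  · rintro ⟨i', ⟨hi', hmax⟩, rfl⟩
    refine ⟨⟨i', hi', rfl⟩, ?_⟩
    rintro j hj h
    obtain ⟨j', hj', rfl⟩ := hj
    exact hmax j' hj' ((extNode_castSucc i' j').1 h)

set_option maxHeartbeats 1000000 in
lemma amp_ext (t : ℕ → ℂ) (hn : 1 ≤ n) :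
    amp t (extNode p I) = amp t p * (lam t I.card (maxIn p I).card / lam t n 0) := by
  unfold amp
  rw [Finset.prod_filter, Finset.prod_filter, Fin.prod_univ_castSucc]
  congr 1
  · apply Finset.prod_congr rfl
    intro m _
    rw [Fin.coe_castSucc]
    by_cases hm : 1 ≤ (m : ℕ)
    · rw [if_pos hm, if_pos hm, pastOf_ext_castSucc, maxIn_map, Finset.card_map,
        Finset.card_map]
    · rw [if_neg hm, if_neg hm]
  · rw [Fin.val_last, if_pos hn, pastOf_ext_last, maxIn_map, Finset.card_map,
      Finset.card_map]

end S4
namespace S4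

variable {n : ℕ} {t : ℕ → ℂ} {μ : Set Omega → ℂ}

lemma zeta_nonneg (hlam : ∀ m : ℕ, lam t m 0 ≠ 0) {c : Fin n → Fin n → Prop}
    (hc : IsNode c) : 0 ≤ zeta t c := by
  unfold zeta
  rw [sub_nonneg, le_div_iff₀ (norm_pos_iff.2 (hlam n)), one_mul]
  calc ‖lam t n 0‖
      = ‖∑ I ∈ Finset.univ.filter (fun I : Finset (Fin n) => isIdeal c I),
          lam t I.card (maxIn c I).card‖ := by rw [sum_ideal_lam t hc]
    _ ≤ Qval t c := norm_sum_le _ _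

lemma one_add_zeta {c : Fin n → Fin n → Prop} :
    Qval t c / ‖lam t n 0‖ = 1 + zeta t c := by
  unfold zeta; ring

lemma Svar_nonneg : 0 ≤ Svar μ n :=
  Finset.sum_nonneg fun _ _ => norm_nonneg _

instance : Subsingleton (Node 1) := ⟨by
  rintro ⟨p, hp⟩ ⟨q, hq⟩
  apply Subtype.ext
  funext i j
  have hij : i = j := Subsingleton.elim i j
  subst hij
  exact propext (iff_of_false (hp.1 i) (hq.1 i))⟩

instance : Nonempty (Node 1) :=
  ⟨⟨fun _ _ => False, fun _ h => h, fun _ _ _ h _ => h.elim, fun _ _ h => h.elim⟩⟩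

lemma Svar_one (hμ : IsCSG t μ) : Svar μ 1 = 1 := by
  have hamp : ∀ p : Node 1, ‖μ (Cyl p.1)‖ = 1 := by
    intro p
    rw [hμ.2 1 le_rfl p.1 p.2]
    unfold amp
    have he : (Finset.univ.filter (fun m : Fin 1 => 1 ≤ (m : ℕ))) = ∅ := by
      ext m
      simp only [Finset.mem_filter, Finset.mem_univ, true_and, Finset.notMem_empty,
        iff_false]
      have : (m : ℕ) = 0 := by omega
      omega
    rw [he, Finset.prod_empty, norm_one]
  unfold Svar
  rw [Finset.sum_congr rfl (fun p _ => hamp p), Finset.sum_const, Finset.card_univ,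
    nsmul_eq_mul, mul_one]
  norm_cast
  have h1 : Fintype.card (Node 1) ≤ 1 := Fintype.card_le_one_iff_subsingleton.2 inferInstance
  have h2 : 0 < Fintype.card (Node 1) := Fintype.card_pos
  omega

lemma Svar_succ (hμ : IsCSG t μ) (hn : 1 ≤ n) :
    Svar μ (n + 1) = ∑ p : Node n,
      ‖amp t p.1‖ * (Qval t p.1 / ‖lam t n 0‖) := by
  unfold Svar
  rw [Finset.sum_congr rfl (fun q (_ : q ∈ Finset.univ) =>
    by rw [hμ.2 (n + 1) (by omega) q.1 q.2])]
  have key : ∑ q : Node (n + 1), ‖amp t q.1‖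
      = ∑ x ∈ (Finset.univ : Finset (Node n)).sigma
          (fun p => Finset.univ.filter (fun I : Finset (Fin n) => isIdeal p.1 I)),
          ‖amp t (extNode x.1.1 x.2)‖ := by
    symm
    refine Finset.sum_bij
      (fun x hx => (⟨extNode x.1.1 x.2, isNode_extNode x.1.2
        (by simpa using (Finset.mem_sigma.1 hx).2)⟩ : Node (n + 1))) ?_ ?_ ?_ ?_
    · intro x hx; exact Finset.mem_univ _
    · rintro ⟨⟨p, hp⟩, I⟩ hx ⟨⟨p', hp'⟩, I'⟩ hx' heq
      have heq' : extNode p I = extNode p' I' := congrArg Subtype.val heq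
      have h1 : p = p' := by
        rw [← @resNode_extNode n p I, ← @resNode_extNode n p' I', heq']
      subst h1
      have h2 : I = I' := by
        rw [← @lastIdeal_extNode n p I, ← @lastIdeal_extNode n p I', heq']
      subst h2
      rfl
    · intro q _
      refine ⟨⟨⟨resNode q.1, isNode_resNode q.2⟩, lastIdeal q.1⟩, ?_, ?_⟩
      · simp only [Finset.mem_sigma, Finset.mem_univ, Finset.mem_filter, true_and]
        exact isIdeal_lastIdeal q.2
      · exact Subtype.ext (extNode_resNode q.2)
    · intro x hx; rfl
  rw [key, Finset.sum_sigma]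
  refine Finset.sum_congr rfl fun p _ => ?_
  calc ∑ I ∈ Finset.univ.filter (fun I : Finset (Fin n) => isIdeal p.1 I),
        ‖amp t (extNode p.1 I)‖
      = ∑ I ∈ Finset.univ.filter (fun I : Finset (Fin n) => isIdeal p.1 I),
        ‖amp t p.1‖ * (‖lam t I.card (maxIn p.1 I).card‖
          / ‖lam t n 0‖) := by
        refine Finset.sum_congr rfl fun I _ => ?_
        rw [amp_ext t hn, norm_mul, norm_div]
    _ = ‖amp t p.1‖ * (Qval t p.1 / ‖lam t n 0‖) := by
        rw [← Finset.mul_sum, ← Finset.sum_div]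
        rfl

lemma Svar_succ_le (hμ : IsCSG t μ) (hn : 1 ≤ n) {z : ℝ}
    (hz : ∀ p : Node n, zeta t p.1 ≤ z) :
    Svar μ (n + 1) ≤ Svar μ n * (1 + z) := by
  rw [Svar_succ hμ hn]
  have hS : Svar μ n = ∑ p : Node n, ‖amp t p.1‖ := by
    unfold Svar
    exact Finset.sum_congr rfl fun p _ => by rw [hμ.2 n hn p.1 p.2]
  rw [hS, Finset.sum_mul]
  refine Finset.sum_le_sum fun p _ => ?_
  rw [one_add_zeta]
  exact mul_le_mul_of_nonneg_left (by linarith [hz p]) (norm_nonneg _)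

lemma Svar_succ_ge (hμ : IsCSG t μ) (hn : 1 ≤ n) {z : ℝ}
    (hz : ∀ p : Node n, z ≤ zeta t p.1) :
    Svar μ n * (1 + z) ≤ Svar μ (n + 1) := by
  rw [Svar_succ hμ hn]
  have hS : Svar μ n = ∑ p : Node n, ‖amp t p.1‖ := by
    unfold Svar
    exact Finset.sum_congr rfl fun p _ => by rw [hμ.2 n hn p.1 p.2]
  rw [hS, Finset.sum_mul]
  refine Finset.sum_le_sum fun p _ => ?_
  rw [one_add_zeta]
  exact mul_le_mul_of_nonneg_left (by linarith [hz p]) (norm_nonneg _)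

end S4
open S4

/-- if Σ_{n≥1} ζ_n^max converges then the ℂSG measure μ_v is of bounded
variation; if Σ_{n≥1} ζ_n^min diverges then μ_v is not of bounded variation.  Here
ζ_n^max (resp. ζ_n^min) is the maximum (resp. minimum) of ζ(p) over all n-nodes p. -/
theorem statement_4 (t : ℕ → ℂ) (ht0 : t 0 = 1) (hlam : ∀ m : ℕ, lam t m 0 ≠ 0)
    (μ : Set Omega → ℂ) (hμ : IsCSG t μ)
    (ζmax ζmin : ℕ → ℝ)
    (hmax : ∀ n : ℕ, 1 ≤ n →
      IsGreatest {x : ℝ | ∃ p : Fin n → Fin n → Prop, IsNode p ∧ x = zeta t p} (ζmax n))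
    (hmin : ∀ n : ℕ, 1 ≤ n →
      IsLeast {x : ℝ | ∃ p : Fin n → Fin n → Prop, IsNode p ∧ x = zeta t p} (ζmin n)) :
    ((∃ L : ℝ, Filter.Tendsto (fun N => ∑ n ∈ Finset.Ico 1 N, ζmax n)
        Filter.atTop (nhds L)) → BoundedVariation μ) ∧
    (¬ (∃ L : ℝ, Filter.Tendsto (fun N => ∑ n ∈ Finset.Ico 1 N, ζmin n)
        Filter.atTop (nhds L)) → ¬ BoundedVariation μ) := by
  have hzmax : ∀ N, 1 ≤ N → ∀ p : Node N, zeta t p.1 ≤ ζmax N :=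
    fun N hN p => (hmax N hN).2 ⟨p.1, p.2, rfl⟩
  have hzmin : ∀ N, 1 ≤ N → ∀ p : Node N, ζmin N ≤ zeta t p.1 :=
    fun N hN p => (hmin N hN).2 ⟨p.1, p.2, rfl⟩
  have hmax0 : ∀ N, 1 ≤ N → 0 ≤ ζmax N := by
    intro N hN
    obtain ⟨p, hp, hE⟩ := (hmax N hN).1
    rw [hE]
    exact zeta_nonneg hlam hp
  have hmin0 : ∀ N, 1 ≤ N → 0 ≤ ζmin N := by
    intro N hN
    obtain ⟨p, hp, hE⟩ := (hmin N hN).1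
    rw [hE]
    exact zeta_nonneg hlam hp
  constructor
  · -- convergence of Σ ζmax ⇒ bounded variation
    rintro ⟨L, hL⟩
    have hub : ∀ N, 1 ≤ N → Svar μ N ≤ Real.exp (∑ n ∈ Finset.Ico 1 N, ζmax n) := by
      intro N hN
      induction N, hN using Nat.le_induction with
      | base =>
        rw [Svar_one hμ]
        simp
      | succ N hN ih =>
        have h2 : (0:ℝ) ≤ 1 + ζmax N := by linarith [hmax0 N hN]
        calc Svar μ (N + 1) ≤ Svar μ N * (1 + ζmax N) := Svar_succ_le hμ hN (hzmax N hN)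
          _ ≤ Real.exp (∑ n ∈ Finset.Ico 1 N, ζmax n) * (1 + ζmax N) :=
              mul_le_mul_of_nonneg_right ih h2
          _ ≤ Real.exp (∑ n ∈ Finset.Ico 1 N, ζmax n) * Real.exp (ζmax N) :=
              mul_le_mul_of_nonneg_left
                (by linarith [Real.add_one_le_exp (ζmax N)]) (Real.exp_nonneg _)
          _ = Real.exp (∑ n ∈ Finset.Ico 1 (N + 1), ζmax n) := by
              rw [← Real.exp_add, Finset.sum_Ico_succ_top hN]
    have hmono : Monotone (fun N => ∑ n ∈ Finset.Ico 1 N, ζmax n) := by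
      intro N M hNM
      refine Finset.sum_le_sum_of_subset_of_nonneg (Finset.Ico_subset_Ico le_rfl hNM) ?_
      intro i hi _
      exact hmax0 i (Finset.mem_Ico.1 hi).1
    have hpartial : ∀ N, (∑ n ∈ Finset.Ico 1 N, ζmax n) ≤ L :=
      hmono.ge_of_tendsto hL
    have hS : ∀ N, 1 ≤ N → Svar μ N ≤ Real.exp L :=
      fun N hN => (hub N hN).trans (Real.exp_le_exp.2 (hpartial N))
    refine ⟨Real.exp L, ?_⟩
    rintro π ⟨hπalg, hπdis, -⟩
    have hex : ∀ s : {s // s ∈ π}, ∃ n, 1 ≤ n ∧ Det n s.1 :=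
      fun s => inAlg_det (hπalg s.1 s.2)
    choose f hf1 hf2 using hex
    set N := max 1 (π.attach.sup f) with hNdef
    have hN1 : 1 ≤ N := le_max_left _ _
    have hdet : ∀ s (hs : s ∈ π), Det N s := fun s hs =>
      det_mono (le_trans (Finset.le_sup (Finset.mem_attach π ⟨s, hs⟩))
        (le_max_right _ _)) (hf2 ⟨s, hs⟩)
    have hdisj : (↑π : Set (Set Omega)).PairwiseDisjoint (nodesOf N) := by
      intro s hs s' hs' hne
      show Disjoint (nodesOf N s) (nodesOf N s')
      rw [Finset.disjoint_left]
      intro p hp hp'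
      simp only [nodesOf, Finset.mem_filter, Finset.mem_univ, true_and] at hp hp'
      exact Set.disjoint_left.1 (hπdis hs hs' hne) hp hp'
    calc ∑ s ∈ π, ‖μ s‖
        = ∑ s ∈ π, ‖∑ p ∈ nodesOf N s, μ (Cyl p.1)‖ :=
          Finset.sum_congr rfl (fun s hs => by rw [mu_det hμ.1 hN1 (hdet s hs)])
      _ ≤ ∑ s ∈ π, ∑ p ∈ nodesOf N s, ‖μ (Cyl p.1)‖ :=
          Finset.sum_le_sum (fun s _ => norm_sum_le _ _)
      _ = ∑ p ∈ π.biUnion (nodesOf N), ‖μ (Cyl p.1)‖ :=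
          (Finset.sum_biUnion hdisj).symm
      _ ≤ ∑ p : Node N, ‖μ (Cyl p.1)‖ :=
          Finset.sum_le_sum_of_subset_of_nonneg (Finset.subset_univ _)
            (fun _ _ _ => norm_nonneg _)
      _ = Svar μ N := rfl
      _ ≤ Real.exp L := hS N hN1
  · -- divergence of Σ ζmin ⇒ unbounded variation
    intro hdiv hBV
    obtain ⟨M, hM⟩ := hBV
    have hpart : ∀ N : ℕ, 1 ≤ N →
        IsPartition (Finset.image (fun p : Node N => Cyl p.1) Finset.univ) ∧
        ∑ s ∈ Finset.image (fun p : Node N => Cyl p.1) Finset.univ,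
          ‖μ s‖ = Svar μ N := by
      intro N hN
      refine ⟨⟨?_, ?_, ?_⟩, ?_⟩
      · intro s hs
        obtain ⟨p, -, rfl⟩ := Finset.mem_image.1 hs
        exact InAlg.basic hN p.1 p.2
      · intro x hx y hy hxy
        obtain ⟨p, -, rfl⟩ := Finset.mem_image.1 (Finset.mem_coe.1 hx)
        obtain ⟨q, -, rfl⟩ := Finset.mem_image.1 (Finset.mem_coe.1 hy)
        exact cyl_disjoint (fun h => hxy (by rw [h]))
      · rw [Set.sUnion_eq_univ_iff]
        intro r
        refine ⟨Cyl (resRel r N), ?_, mem_cyl_res r N⟩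
        exact Finset.mem_coe.2 (Finset.mem_image.2
          ⟨⟨resRel r N, resRel_isNode r N⟩, Finset.mem_univ _, rfl⟩)
      · rw [Finset.sum_image (fun p _ q _ h => cyl_injective h)]
        rfl
    have hSleM : ∀ N, 1 ≤ N → Svar μ N ≤ M := by
      intro N hN
      rw [← (hpart N hN).2]
      exact hM _ (hpart N hN).1
    have hlb : ∀ N, 1 ≤ N → 1 + (∑ n ∈ Finset.Ico 1 N, ζmin n) ≤ Svar μ N := by
      intro N hN
      induction N, hN using Nat.le_induction with
      | base =>
        rw [Svar_one hμ]
        simp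
      | succ N hN ih =>
        have h2 : (0:ℝ) ≤ 1 + ζmin N := by linarith [hmin0 N hN]
        have hsum0 : 0 ≤ ∑ n ∈ Finset.Ico 1 N, ζmin n :=
          Finset.sum_nonneg (fun i hi => hmin0 i (Finset.mem_Ico.1 hi).1)
        have h3 := Svar_succ_ge hμ hN (hzmin N hN)
        have h4 : (1 + (∑ n ∈ Finset.Ico 1 N, ζmin n)) * (1 + ζmin N)
            ≤ Svar μ N * (1 + ζmin N) := mul_le_mul_of_nonneg_right ih h2
        have h0 := hmin0 N hN
        rw [Finset.sum_Ico_succ_top hN]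
        nlinarith
    apply hdiv
    have hmono : Monotone (fun N => ∑ n ∈ Finset.Ico 1 N, ζmin n) := by
      intro N K hNK
      refine Finset.sum_le_sum_of_subset_of_nonneg (Finset.Ico_subset_Ico le_rfl hNK) ?_
      intro i hi _
      exact hmin0 i (Finset.mem_Ico.1 hi).1
    have hbdd : BddAbove (Set.range (fun N => ∑ n ∈ Finset.Ico 1 N, ζmin n)) := by
      refine ⟨M, ?_⟩
      rintro x ⟨N, rfl⟩
      have hM1 : (1:ℝ) ≤ M := by
        have := (hlb 1 le_rfl).trans (hSleM 1 le_rfl)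
        simpa using this
      rcases Nat.eq_zero_or_pos N with rfl | hN
      · simpa using (le_trans (by norm_num : (0:ℝ) ≤ 1) hM1)
      · have := (hlb N hN).trans (hSleM N hN)
        simp only
        linarith
    exact ⟨_, tendsto_atTop_ciSup hmono hbdd⟩

end
end

section
/- For every partial order c on a finite set of cardinality n, Σ_{I an order ideal of c} λ(|I|, m(I)) = Σ_{k=0}^{n} C(n,k)·t_k = λ(n,0). -/
open MeasureTheory Filter Finset

attribute [local instance] Classical.propDecidable

noncomputable section

lemma sum_powerset_card {α : Type*} [DecidableEq α] (s : Finset α) (g : ℕ → ℂ) :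
    ∑ J ∈ s.powerset, g J.card
      = ∑ j ∈ Finset.range (s.card + 1), (s.card.choose j : ℂ) * g j := by
  rw [Finset.powerset_card_biUnion, Finset.sum_biUnion]
  · refine Finset.sum_congr rfl fun j _ => ?_
    rw [Finset.sum_congr rfl (fun J hJ => ?_), Finset.sum_const, nsmul_eq_mul,
      Finset.card_powersetCard]
    rw [(Finset.mem_powersetCard.mp hJ).2]
  · intro i _ j _ hij
    simp only [Function.onFun, Finset.disjoint_left, Finset.mem_powersetCard]
    rintro J ⟨-, rfl⟩ hJ'
    exact hij (hJ'.2.symm ▸ rfl)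

lemma lam_eq_range (t : ℕ → ℂ) {a b : ℕ} (hba : b ≤ a) :
    lam t a b = ∑ j ∈ Finset.range (a - b + 1), ((a - b).choose j : ℂ) * t (j + b) := by
  rw [lam]
  refine Finset.sum_nbij' (fun k => k - b) (fun j => j + b) ?_ ?_ ?_ ?_ ?_
  · intro k hk; simp at hk ⊢; omega
  · intro j hj; simp at hj ⊢; omega
  · intro k hk; simp only [Finset.mem_Icc] at hk; show k - b + b = k; omega
  · intro j hj; show j + b - b = j; omega
  · intro k hk; simp only [Finset.mem_Icc] at hk; rw [Nat.sub_add_cancel hk.1]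

section Main
variable {n : ℕ} (c : Fin n → Fin n → Prop)
  (hirr : ∀ i, ¬ c i i) (htrans : ∀ i j k, c i j → c j k → c i k)

/-- down closure -/
def downCl (J : Finset (Fin n)) : Finset (Fin n) :=
  Finset.univ.filter fun i => i ∈ J ∨ ∃ j ∈ J, c i j

include htrans in
lemma downCl_ideal (J : Finset (Fin n)) : isIdeal c (downCl c J) := by
  intro j hj i hij
  simp only [downCl, Finset.mem_filter, Finset.mem_univ, true_and] at hj ⊢
  rcases hj with hj | ⟨k, hk, hjk⟩
  · exact Or.inr ⟨j, hj, hij⟩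
  · exact Or.inr ⟨k, hk, htrans _ _ _ hij hjk⟩

include hirr htrans in
lemma exists_max {I : Finset (Fin n)} :
    ∀ i ∈ I, ∃ m ∈ maxIn c I, i = m ∨ c i m := by
  suffices h : ∀ N, ∀ i ∈ I, (I.filter (fun j => c i j)).card ≤ N →
      ∃ m ∈ maxIn c I, i = m ∨ c i m by
    intro i hi; exact h _ i hi le_rfl
  intro N
  induction N with
  | zero =>
    intro i hi hle
    have hemp : I.filter (fun j => c i j) = ∅ := Finset.card_eq_zero.mp (Nat.le_zero.mp hle)
    refine ⟨i, Finset.mem_filter.mpr ⟨hi, fun j hj hij => ?_⟩, Or.inl rfl⟩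
    exact absurd (Finset.mem_filter.mpr ⟨hj, hij⟩) (hemp ▸ Finset.notMem_empty j)
  | succ N ih =>
    intro i hi hle
    by_cases hmax : ∀ j ∈ I, ¬ c i j
    · exact ⟨i, Finset.mem_filter.mpr ⟨hi, hmax⟩, Or.inl rfl⟩
    · push_neg at hmax
      obtain ⟨j, hj, hij⟩ := hmax
      have hsub : I.filter (fun k => c j k) ⊂ I.filter (fun k => c i k) := by
        refine Finset.ssubset_iff_of_subset ?_ |>.mpr ⟨j, ?_, ?_⟩
        · intro k hk
          simp only [Finset.mem_filter] at hk ⊢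
          exact ⟨hk.1, htrans _ _ _ hij hk.2⟩
        · exact Finset.mem_filter.mpr ⟨hj, hij⟩
        · simp [hirr j]
      have hlt : (I.filter (fun k => c j k)).card ≤ N :=
        Nat.lt_succ_iff.mp (lt_of_lt_of_le (Finset.card_lt_card hsub) hle)
      obtain ⟨m, hm, hjm⟩ := ih j hj hlt
      refine ⟨m, hm, Or.inr ?_⟩
      rcases hjm with rfl | hjm
      · exact hij
      · exact htrans _ _ _ hij hjm

include hirr htrans in
lemma downCl_eq_iff {I J : Finset (Fin n)} (hI : isIdeal c I) :
    downCl c J = I ↔ maxIn c I ⊆ J ∧ J ⊆ I := by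
  constructor
  · rintro rfl
    constructor
    · intro m hm
      simp only [maxIn, Finset.mem_filter] at hm
      obtain ⟨hmD, hmax⟩ := hm
      simp only [downCl, Finset.mem_filter, Finset.mem_univ, true_and] at hmD
      rcases hmD with h | ⟨j, hj, hmj⟩
      · exact h
      · exact absurd hmj (hmax j (by
          simp only [downCl, Finset.mem_filter, Finset.mem_univ, true_and]
          exact Or.inl hj))
    · intro j hj
      simp only [downCl, Finset.mem_filter, Finset.mem_univ, true_and]
      exact Or.inl hj
  · rintro ⟨hMJ, hJI⟩
    apply Finset.Subset.antisymm
    · intro i hi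
      simp only [downCl, Finset.mem_filter, Finset.mem_univ, true_and] at hi
      rcases hi with h | ⟨j, hj, hij⟩
      · exact hJI h
      · exact hI j (hJI hj) i hij
    · intro i hi
      simp only [downCl, Finset.mem_filter, Finset.mem_univ, true_and]
      obtain ⟨m, hm, him⟩ := exists_max c hirr htrans i hi
      rcases him with rfl | him
      · exact Or.inl (hMJ hm)
      · exact Or.inr ⟨m, hMJ hm, him⟩

include hirr htrans in
lemma lam_eq_sum (t : ℕ → ℂ) {I : Finset (Fin n)} (hI : isIdeal c I) :
    lam t I.card (maxIn c I).card
      = ∑ J ∈ Finset.univ.powerset.filter (fun J => downCl c J = I), t J.card := by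
  set M := maxIn c I with hM
  have hMI : M ⊆ I := Finset.filter_subset _ _
  have hb : M.card ≤ I.card := Finset.card_le_card hMI
  have hfe : Finset.univ.powerset.filter (fun J => downCl c J = I)
      = I.powerset.filter (fun J => M ⊆ J) := by
    ext J
    simp only [Finset.mem_filter, Finset.mem_powerset, Finset.subset_univ, true_and,
      downCl_eq_iff c hirr htrans hI]
    tauto
  rw [hfe]
  have hbij : ∑ J ∈ I.powerset.filter (fun J => M ⊆ J), t J.card
      = ∑ S ∈ (I \ M).powerset, t (S.card + M.card) := by
    refine Finset.sum_nbij' (fun J => J \ M) (fun S => S ∪ M) ?_ ?_ ?_ ?_ ?_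
    · intro J hJ
      simp only [Finset.mem_filter, Finset.mem_powerset] at hJ ⊢
      exact Finset.sdiff_subset_sdiff hJ.1 (Finset.Subset.refl M)
    · intro S hS
      simp only [Finset.mem_filter, Finset.mem_powerset] at hS ⊢
      exact ⟨Finset.union_subset (hS.trans Finset.sdiff_subset) hMI, Finset.subset_union_right⟩
    · intro J hJ
      simp only [Finset.mem_filter, Finset.mem_powerset] at hJ
      exact Finset.sdiff_union_of_subset hJ.2
    · intro S hS
      simp only [Finset.mem_powerset] at hS
      have hd : Disjoint S M := Finset.sdiff_disjoint.mono_left hS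
      show (S ∪ M) \ M = S
      rw [Finset.union_sdiff_distrib, Finset.sdiff_self, Finset.union_empty,
        Finset.sdiff_eq_self_of_disjoint hd]
    · intro J hJ
      simp only [Finset.mem_filter, Finset.mem_powerset] at hJ
      rw [Finset.card_sdiff_add_card_eq_card hJ.2]
  rw [hbij, sum_powerset_card (I \ M) (fun m => t (m + M.card)), Finset.card_sdiff_of_subset hMI,
    lam_eq_range t hb]

end Main

/-- for every (strict) partial order c on a finite set of cardinality n,
Σ_{I an order ideal of c} λ(|I|, m(I)) = Σ_{k=0}^{n} C(n,k)·t_k = λ(n,0). -/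
theorem statement_5 (t : ℕ → ℂ) (n : ℕ) (c : Fin n → Fin n → Prop)
    (hirr : ∀ i, ¬ c i i) (htrans : ∀ i j k, c i j → c j k → c i k) :
    (∑ I ∈ Finset.univ.filter (fun I : Finset (Fin n) => isIdeal c I),
        lam t I.card (maxIn c I).card)
      = ∑ k ∈ Finset.range (n + 1), (n.choose k : ℂ) * t k ∧
    (∑ k ∈ Finset.range (n + 1), (n.choose k : ℂ) * t k) = lam t n 0 := by
  constructor
  · calc ∑ I ∈ Finset.univ.filter (fun I : Finset (Fin n) => isIdeal c I),
        lam t I.card (maxIn c I).card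
        = ∑ I ∈ Finset.univ.filter (fun I : Finset (Fin n) => isIdeal c I),
            ∑ J ∈ Finset.univ.powerset.filter (fun J => downCl c J = I), t J.card := by
          refine Finset.sum_congr rfl fun I hI => ?_
          exact lam_eq_sum c hirr htrans t (Finset.mem_filter.mp hI).2
      _ = ∑ J ∈ (Finset.univ : Finset (Fin n)).powerset, t J.card := by
          refine Finset.sum_fiberwise_of_maps_to ?_ _
          intro J _
          exact Finset.mem_filter.mpr ⟨Finset.mem_univ _, downCl_ideal c htrans J⟩
      _ = ∑ k ∈ Finset.range (n + 1), (n.choose k : ℂ) * t k := by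
          rw [sum_powerset_card]
          simp [Finset.card_univ]
  · rw [lam_eq_range t (Nat.zero_le n)]
    simp
end
end

section
/- For every partial order c on a finite set of cardinality n, Q(c) ≤ Σ_{k=0}^{n} C(n,k)·|t_k|, and the n-element antichain attains this bound. Consequently, if λ(n,0) ≠ 0, then the maximum of ζ(c) over all partial orders c on a set of cardinality n equals ζ_n^a, the value at the n-element antichain. -/
open MeasureTheory Filter Finset

attribute [local instance] Classical.propDecidable

noncomputable section

-- triangle inequality for lam
lemma abs_lam_le (t : ℕ → ℂ) (a b : ℕ) :
    ‖lam t a b‖ ≤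
      ∑ k ∈ Finset.Icc b a, ((a - b).choose (k - b) : ℝ) * ‖t k‖ := by
  refine le_trans (norm_sum_le _ _) (le_of_eq ?_)
  refine Finset.sum_congr rfl fun k _ => ?_
  rw [norm_mul, Complex.norm_natCast]

lemma lam_self (t : ℕ → ℂ) (a : ℕ) : lam t a a = t a := by
  simp [lam]

-- every element of a finite set lies below a maximal element
lemma exists_le_max {n : ℕ} {c : Fin n → Fin n → Prop}
    (hirr : ∀ i, ¬ c i i) (htr : ∀ i j k, c i j → c j k → c i k)
    (I : Finset (Fin n)) : ∀ x ∈ I, ∃ m ∈ maxIn c I, x = m ∨ c x m := by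
  suffices h : ∀ N : ℕ, ∀ x ∈ I, (I.filter (fun y => c x y)).card ≤ N →
      ∃ m ∈ maxIn c I, x = m ∨ c x m by
    intro x hx
    exact h _ x hx le_rfl
  intro N
  induction N with
  | zero =>
    intro x hx h0
    refine ⟨x, Finset.mem_filter.2 ⟨hx, fun j hj hcxj => ?_⟩, Or.inl rfl⟩
    have : j ∈ I.filter (fun y => c x y) := Finset.mem_filter.2 ⟨hj, hcxj⟩
    simp [Finset.card_eq_zero.1 (Nat.le_zero.1 h0)] at this
  | succ N ih =>
    intro x hx h
    by_cases hmax : ∀ j ∈ I, ¬ c x j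
    · exact ⟨x, Finset.mem_filter.2 ⟨hx, hmax⟩, Or.inl rfl⟩
    · push_neg at hmax
      obtain ⟨y, hyI, hxy⟩ := hmax
      have hsub : I.filter (fun z => c y z) ⊂ I.filter (fun z => c x z) := by
        refine Finset.ssubset_iff_of_subset ?_ |>.2 ?_
        · intro z hz
          rw [Finset.mem_filter] at hz ⊢
          exact ⟨hz.1, htr _ _ _ hxy hz.2⟩
        · exact ⟨y, Finset.mem_filter.2 ⟨hyI, hxy⟩,
            fun hy => (hirr y) ((Finset.mem_filter.1 hy).2)⟩
      obtain ⟨m, hm, hym⟩ := ih y hyI (by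
        have := Finset.card_lt_card hsub
        omega)
      refine ⟨m, hm, Or.inr ?_⟩
      rcases hym with rfl | hym
      · exact hxy
      · exact htr _ _ _ hxy hym
  
lemma maxIn_sandwich {n : ℕ} {c : Fin n → Fin n → Prop}
    (hirr : ∀ i, ¬ c i i) (htr : ∀ i j k, c i j → c j k → c i k)
    {I J : Finset (Fin n)} (hJI : J ⊆ I) (hMJ : maxIn c I ⊆ J) :
    maxIn c J = maxIn c I := by
  ext x
  simp only [maxIn, Finset.mem_filter]
  constructor
  · rintro ⟨hxJ, hmax⟩
    obtain ⟨m, hm, hxm⟩ := exists_le_max hirr htr I x (hJI hxJ)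
    rcases hxm with rfl | hxm
    · exact Finset.mem_filter.1 hm
    · exact absurd hxm (hmax m (hMJ hm))
  · rintro ⟨hxI, hmax⟩
    exact ⟨hMJ (Finset.mem_filter.2 ⟨hxI, hmax⟩), fun j hj => hmax j (hJI hj)⟩

lemma ideal_eq_of_maxIn_eq {n : ℕ} {c : Fin n → Fin n → Prop}
    (hirr : ∀ i, ¬ c i i) (htr : ∀ i j k, c i j → c j k → c i k)
    {I₁ I₂ : Finset (Fin n)} (h1 : isIdeal c I₁) (h2 : isIdeal c I₂)
    (hM : maxIn c I₁ = maxIn c I₂) : I₁ = I₂ := by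
  have key : ∀ I₁ I₂ : Finset (Fin n), isIdeal c I₂ →
      maxIn c I₁ = maxIn c I₂ → I₁ ⊆ I₂ := by
    intro I₁ I₂ h2 hM x hx
    obtain ⟨m, hm, hxm⟩ := exists_le_max hirr htr I₁ x hx
    rw [hM] at hm
    have hmI₂ : m ∈ I₂ := Finset.mem_of_mem_filter m hm
    rcases hxm with rfl | hxm
    · exact hmI₂
    · exact h2 m hmI₂ x hxm
  exact Finset.Subset.antisymm (key _ _ h2 hM) (key _ _ h1 hM.symm)

-- sum over all subsets of a fintype grouped by cardinality
lemma sum_card_eq {n : ℕ} (f : ℕ → ℝ) :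
    ∑ J : Finset (Fin n), f J.card
      = ∑ k ∈ Finset.range (n + 1), (n.choose k : ℝ) * f k := by
  rw [← Finset.powerset_univ, Finset.sum_powerset]
  rw [Finset.card_univ, Fintype.card_fin]
  refine Finset.sum_congr rfl fun j hj => ?_
  rw [Finset.sum_congr rfl (fun J hJ => by
    rw [(Finset.mem_powersetCard.1 hJ).2]), Finset.sum_const,
    Finset.card_powersetCard, Finset.card_univ, Fintype.card_fin, nsmul_eq_mul]

-- inner sum rewriting
lemma inner_sum_eq {n : ℕ} (t : ℕ → ℂ) (c : Fin n → Fin n → Prop) (I : Finset (Fin n)) :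
    ∑ k ∈ Finset.Icc (maxIn c I).card I.card,
        ((I.card - (maxIn c I).card).choose (k - (maxIn c I).card) : ℝ) * ‖t k‖
      = ∑ S ∈ (I \ maxIn c I).powerset, ‖t ((maxIn c I ∪ S).card)‖ := by
  set M := maxIn c I with hM
  have hMI : M ⊆ I := Finset.filter_subset _ _
  have hml : M.card ≤ I.card := Finset.card_le_card hMI
  have hD : (I \ M).card = I.card - M.card := Finset.card_sdiff_of_subset hMI
  rw [Finset.sum_powerset, hD]
  have hrange : Finset.Icc M.card I.card
      = (Finset.range (I.card - M.card + 1)).map ⟨fun j => M.card + j, fun a b h => by simpa using h⟩ := by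
    ext k
    simp only [Finset.mem_Icc, Finset.mem_map, Finset.mem_range, Function.Embedding.coeFn_mk]
    constructor
    · rintro ⟨h1, h2⟩; exact ⟨k - M.card, by omega, show M.card + (k - M.card) = k by omega⟩
    · rintro ⟨j, hj, rfl⟩; show M.card ≤ M.card + j ∧ M.card + j ≤ I.card; omega
  rw [hrange, Finset.sum_map]
  refine Finset.sum_congr rfl fun j hj => ?_
  change (((I.card - M.card).choose (M.card + j - M.card) : ℝ) * ‖t (M.card + j)‖) = _
  simp only [Function.Embedding.coeFn_mk, Nat.add_sub_cancel_left]
  rw [Finset.sum_congr rfl (fun S hS => by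
      have hSD : S ⊆ I \ M := Finset.mem_powersetCard.1 hS |>.1
      have hdis : Disjoint M S := (Finset.disjoint_sdiff.mono_right hSD)
      rw [Finset.card_union_of_disjoint hdis, (Finset.mem_powersetCard.1 hS).2]),
    Finset.sum_const, Finset.card_powersetCard, hD, nsmul_eq_mul]

set_option maxHeartbeats 1000000 in
theorem statement_6' (t : ℕ → ℂ) (n : ℕ) :
    (∀ c : Fin n → Fin n → Prop, (∀ i, ¬ c i i) → (∀ i j k, c i j → c j k → c i k) →
      Qval t c ≤ ∑ k ∈ Finset.range (n + 1), (n.choose k : ℝ) * ‖t k‖) ∧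
    Qval t (fun _ _ : Fin n => False)
      = ∑ k ∈ Finset.range (n + 1), (n.choose k : ℝ) * ‖t k‖ := by
  have antichain : Qval t (fun _ _ : Fin n => False)
      = ∑ k ∈ Finset.range (n + 1), (n.choose k : ℝ) * ‖t k‖ := by
    rw [← sum_card_eq (fun k => ‖t k‖)]
    unfold Qval
    have hfil : Finset.univ.filter (fun I : Finset (Fin n) => isIdeal (fun _ _ : Fin n => False) I)
        = Finset.univ := Finset.filter_true_of_mem (fun I _ => fun j _ i h => h.elim)
    rw [hfil]
    refine Finset.sum_congr rfl fun I _ => ?_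
    have : maxIn (fun _ _ : Fin n => False) I = I := by
      simp [maxIn]
    rw [this, lam_self]
  refine ⟨?_, antichain⟩
  intro c hirr htr
  set P := Finset.univ.filter (fun I : Finset (Fin n) => isIdeal c I) with hP
  calc Qval t c ≤ ∑ I ∈ P, ∑ S ∈ (I \ maxIn c I).powerset,
        ‖t ((maxIn c I ∪ S).card)‖ := by
        refine Finset.sum_le_sum fun I _ => ?_
        rw [← inner_sum_eq t c I]
        exact abs_lam_le t I.card (maxIn c I).card
    _ = ∑ x ∈ P.sigma (fun I => (I \ maxIn c I).powerset),
        ‖t ((maxIn c x.1 ∪ x.2).card)‖ :=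
        Finset.sum_sigma' P _ _
    _ = ∑ J ∈ (P.sigma (fun I => (I \ maxIn c I).powerset)).image
          (fun x => maxIn c x.1 ∪ x.2), ‖t J.card‖ := by
        refine (Finset.sum_image (f := fun J : Finset (Fin n) => ‖t J.card‖)
          (g := fun x : (_ : Finset (Fin n)) × Finset (Fin n) => maxIn c x.1 ∪ x.2) ?_).symm
        rintro ⟨I₁, S₁⟩ hx ⟨I₂, S₂⟩ hy hxy
        have hx : (⟨I₁, S₁⟩ : (_ : Finset (Fin n)) × Finset (Fin n)) ∈ P.sigma (fun I => (I \ maxIn c I).powerset) := hx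
        have hy : (⟨I₂, S₂⟩ : (_ : Finset (Fin n)) × Finset (Fin n)) ∈ P.sigma (fun I => (I \ maxIn c I).powerset) := hy
        simp only [Finset.mem_sigma, hP, Finset.mem_filter, Finset.mem_powerset] at hx hy
        simp only at hxy
        have hI1 : isIdeal c I₁ := hx.1.2
        have hI2 : isIdeal c I₂ := hy.1.2
        have hS1 : S₁ ⊆ I₁ \ maxIn c I₁ := hx.2
        have hS2 : S₂ ⊆ I₂ \ maxIn c I₂ := hy.2
        have hJI1 : maxIn c I₁ ∪ S₁ ⊆ I₁ := Finset.union_subset (Finset.filter_subset _ _)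
          (hS1.trans (Finset.sdiff_subset))
        have hJI2 : maxIn c I₁ ∪ S₁ ⊆ I₂ := hxy ▸ Finset.union_subset
          (Finset.filter_subset _ _) (hS2.trans (Finset.sdiff_subset))
        have hM1 : maxIn c (maxIn c I₁ ∪ S₁) = maxIn c I₁ :=
          maxIn_sandwich hirr htr hJI1 Finset.subset_union_left
        have hM2 : maxIn c (maxIn c I₁ ∪ S₁) = maxIn c I₂ := by
          rw [hxy]
          exact maxIn_sandwich hirr htr (hxy ▸ hJI2) Finset.subset_union_left
        have hMeq : maxIn c I₁ = maxIn c I₂ := hM1 ▸ hM2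
        have hIeq : I₁ = I₂ := ideal_eq_of_maxIn_eq hirr htr hI1 hI2 hMeq
        have hd1 : Disjoint (maxIn c I₁) S₁ := Finset.disjoint_sdiff.mono_right hS1
        have hd2 : Disjoint (maxIn c I₂) S₂ := Finset.disjoint_sdiff.mono_right hS2
        have hSeq : S₁ = S₂ := by
          have e1 : (maxIn c I₁ ∪ S₁) \ maxIn c I₁ = S₁ := Finset.union_sdiff_cancel_left hd1
          have e2 : (maxIn c I₂ ∪ S₂) \ maxIn c I₂ = S₂ := Finset.union_sdiff_cancel_left hd2
          rw [hMeq] at hxy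
          rw [← e1, ← e2, hMeq, hxy]
        subst hIeq; subst hSeq; rfl
    _ ≤ ∑ J : Finset (Fin n), ‖t J.card‖ := by
        refine Finset.sum_le_sum_of_subset_of_nonneg (Finset.subset_univ _)
          fun J _ _ => norm_nonneg _
    _ = ∑ k ∈ Finset.range (n + 1), (n.choose k : ℝ) * ‖t k‖ :=
        sum_card_eq (n := n) (fun k => ‖t k‖)

/-- Q(c) ≤ Σ_{k=0}^{n} C(n,k)·|t_k| for every (strict) partial order c on a
set of cardinality n, the n-antichain attains the bound, and hence if λ(n,0) ≠ 0 the
maximum of ζ(c) over all such partial orders is ζ_n^a, attained at the antichain. -/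
theorem statement_6 (t : ℕ → ℂ) (n : ℕ) :
    (∀ c : Fin n → Fin n → Prop, (∀ i, ¬ c i i) → (∀ i j k, c i j → c j k → c i k) →
      Qval t c ≤ ∑ k ∈ Finset.range (n + 1), (n.choose k : ℝ) * ‖t k‖) ∧
    Qval t (fun _ _ : Fin n => False)
      = ∑ k ∈ Finset.range (n + 1), (n.choose k : ℝ) * ‖t k‖ ∧
    (lam t n 0 ≠ 0 →
      IsGreatest {x : ℝ | ∃ c : Fin n → Fin n → Prop,
          (∀ i, ¬ c i i) ∧ (∀ i j k, c i j → c j k → c i k) ∧ x = zeta t c}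
        (zetaA t n)) := by
  obtain ⟨hbound, hanti⟩ := statement_6' t n
  refine ⟨hbound, hanti, fun h => ⟨?_, ?_⟩⟩
  · refine ⟨fun _ _ => False, fun i hi => hi, fun i j k hij _ => hij.elim, ?_⟩
    unfold zeta zetaA
    rw [hanti]
  · rintro x ⟨c, hirr, htr, rfl⟩
    unfold zeta zetaA
    have hA : 0 < ‖lam t n 0‖ := norm_pos_iff.mpr h
    have := hbound c hirr htr
    gcongr

end
end

section
/- For every partial order c on a finite set of cardinality n, Q(c) ≥ |t_0| + Σ_{ϖ=1}^{n} |λ(ϖ,1)|, and the n-element chain (total order) attains this bound. Consequently, if λ(n,0) ≠ 0, then the minimum of ζ(c) over all partial orders c on a set of cardinality n equals ζ_n^c, the value at the n-element chain. -/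
open MeasureTheory Filter Finset

attribute [local instance] Classical.propDecidable

noncomputable section

section Helpers

lemma lam_eq (t : ℕ → ℂ) (a b : ℕ) (h : b ≤ a) :
    lam t a b = ∑ j ∈ Finset.range (a - b + 1), ((a - b).choose j : ℂ) * t (b + j) := by
  rw [lam, ← Finset.Ico_add_one_right_eq_Icc, Finset.sum_Ico_eq_sum_range]
  have : a + 1 - b = a - b + 1 := by omega
  rw [this]
  refine Finset.sum_congr rfl fun j hj => ?_
  have hbj : b + j - b = j := by omega
  rw [hbj]

lemma lam_rec (t : ℕ → ℂ) (a b : ℕ) (h : b < a) :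
    lam t a b = lam t (a - 1) b + lam t a (b + 1) := by
  obtain ⟨d, rfl⟩ : ∃ d, a = b + d + 1 := ⟨a - b - 1, by omega⟩
  rw [lam_eq t _ b (by omega), lam_eq t _ b (by omega), lam_eq t _ (b+1) (by omega)]
  have h1 : b + d + 1 - b = d + 1 := by omega
  have h2 : b + d + 1 - 1 - b = d := by omega
  have h3 : b + d + 1 - (b + 1) = d := by omega
  rw [h1, h2, h3]
  rw [Finset.sum_range_succ' (fun j => ((d+1).choose j : ℂ) * t (b + j))]
  have : ∀ j, ((d+1).choose (j+1) : ℂ) = (d.choose j : ℂ) + (d.choose (j+1) : ℂ) := by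
    intro j; rw [Nat.choose_succ_succ]; push_cast; ring
  calc (∑ j ∈ Finset.range (d+1), ((d+1).choose (j+1) : ℂ) * t (b + (j+1)))
        + ((d+1).choose 0 : ℂ) * t (b + 0)
      = (((d).choose 0 : ℂ) * t (b + 0) + ∑ j ∈ Finset.range (d+1), (d.choose (j+1) : ℂ) * t (b + (j+1)))
        + ∑ j ∈ Finset.range (d+1), (d.choose j : ℂ) * t (b + 1 + j) := by
        simp only [this, add_mul, Finset.sum_add_distrib]
        have : ∀ j, b + (j + 1) = b + 1 + j := by omega
        rw [Finset.sum_congr rfl (fun j _ => by rw [this j])]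
        simp [Nat.choose_zero_right]
        ring
    _ = (∑ j ∈ Finset.range (d+1), (d.choose j : ℂ) * t (b + j))
        + ∑ j ∈ Finset.range (d+1), (d.choose j : ℂ) * t (b + 1 + j) := by
        congr 1
        rw [Finset.sum_range_succ' (fun j => ((d).choose j : ℂ) * t (b + j))]
        rw [Finset.sum_range_succ]
        simp [Nat.choose_succ_self]
        ring

variable {n : ℕ} {c : Fin n → Fin n → Prop}

lemma mem_maxIn {I : Finset (Fin n)} {x : Fin n} :
    x ∈ maxIn c I ↔ x ∈ I ∧ ∀ j ∈ I, ¬ c x j := by simp [maxIn]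

lemma maxIn_subset (I : Finset (Fin n)) : maxIn c I ⊆ I := Finset.filter_subset _ _

lemma exists_max_above (hirr : ∀ i, ¬ c i i) (htr : ∀ i j k, c i j → c j k → c i k) :
    ∀ (m : ℕ) (I : Finset (Fin n)) (x : Fin n), x ∈ I →
      (I.filter (fun z => c x z)).card ≤ m → ∃ y ∈ maxIn c I, x = y ∨ c x y := by
  intro m
  induction m with
  | zero =>
    intro I x hx hcard
    refine ⟨x, mem_maxIn.2 ⟨hx, fun j hj hcj => ?_⟩, Or.inl rfl⟩
    have : j ∈ I.filter (fun z => c x z) := Finset.mem_filter.2 ⟨hj, hcj⟩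
    have := Finset.card_pos.2 ⟨j, this⟩
    omega
  | succ m ih =>
    intro I x hx hcard
    by_cases hmax : ∀ j ∈ I, ¬ c x j
    · exact ⟨x, mem_maxIn.2 ⟨hx, hmax⟩, Or.inl rfl⟩
    · push_neg at hmax
      obtain ⟨z, hz, hxz⟩ := hmax
      have hsub : I.filter (fun w => c z w) ⊆ I.filter (fun w => c x w) :=
        fun w hw => by
          rw [Finset.mem_filter] at *
          exact ⟨hw.1, htr _ _ _ hxz hw.2⟩
      have hzz : z ∈ I.filter (fun w => c x w) := Finset.mem_filter.2 ⟨hz, hxz⟩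
      have hzn : z ∉ I.filter (fun w => c z w) := fun h => hirr z (Finset.mem_filter.1 h).2
      have hlt : (I.filter (fun w => c z w)).card < (I.filter (fun w => c x w)).card :=
        Finset.card_lt_card (Finset.ssubset_iff_of_subset hsub |>.2 ⟨z, hzz, hzn⟩)
      obtain ⟨y, hy, hzy⟩ := ih I z hz (by omega)
      refine ⟨y, hy, Or.inr ?_⟩
      rcases hzy with rfl | h
      · exact hxz
      · exact htr _ _ _ hxz h

lemma maxIn_nonempty (hirr : ∀ i, ¬ c i i) (htr : ∀ i j k, c i j → c j k → c i k)
    {I : Finset (Fin n)} (hI : I.Nonempty) : (maxIn c I).Nonempty := by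
  obtain ⟨x, hx⟩ := hI
  obtain ⟨y, hy, _⟩ := exists_max_above hirr htr (I.filter (fun z => c x z)).card I x hx le_rfl
  exact ⟨y, hy⟩

lemma ideal_eq_of_maxIn_subset (hirr : ∀ i, ¬ c i i) (htr : ∀ i j k, c i j → c j k → c i k)
    {I J : Finset (Fin n)} (hJ : isIdeal c J) (hJI : J ⊆ I) (hmax : maxIn c I ⊆ J) : J = I := by
  refine Finset.Subset.antisymm hJI fun x hx => ?_
  obtain ⟨y, hy, hxy⟩ := exists_max_above hirr htr (I.filter (fun z => c x z)).card I x hx le_rfl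
  rcases hxy with rfl | h
  · exact hmax hy
  · exact hJ y (hmax hy) x h

lemma erase_ideal (hI : isIdeal c I) {y : Fin n} (hy : y ∈ maxIn c I) :
    isIdeal c (I.erase y) := by
  intro j hj i hij
  have hjI : j ∈ I := Finset.mem_of_mem_erase hj
  have hiI : i ∈ I := hI j hjI i hij
  refine Finset.mem_erase.2 ⟨?_, hiI⟩
  rintro rfl
  exact (mem_maxIn.1 hy).2 j hjI hij


lemma key_lemma (t : ℕ → ℂ) (hirr : ∀ i, ¬ c i i) (htr : ∀ i j k, c i j → c j k → c i k) :
    ∀ (k : ℕ) (I S : Finset (Fin n)), isIdeal c I → S ⊆ maxIn c I → S.Nonempty →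
      I.card - S.card ≤ k →
      ‖lam t I.card S.card‖ ≤
        ∑ J ∈ Finset.univ.filter (fun J : Finset (Fin n) => isIdeal c J ∧ S ⊆ J ∧ J ⊆ I),
          ‖lam t J.card (maxIn c J).card‖ := by
  have base : ∀ (I S : Finset (Fin n)), isIdeal c I → S ⊆ maxIn c I → maxIn c I ⊆ S →
      ‖lam t I.card S.card‖ ≤
        ∑ J ∈ Finset.univ.filter (fun J : Finset (Fin n) => isIdeal c J ∧ S ⊆ J ∧ J ⊆ I),
          ‖lam t J.card (maxIn c J).card‖ := by
    intro I S hI hS hS'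
    have hSeq : S = maxIn c I := Finset.Subset.antisymm hS hS'
    have hset : Finset.univ.filter (fun J : Finset (Fin n) => isIdeal c J ∧ S ⊆ J ∧ J ⊆ I)
        = {I} := by
      ext J
      simp only [Finset.mem_filter, Finset.mem_univ, true_and, Finset.mem_singleton]
      constructor
      · rintro ⟨hJ, hSJ, hJI⟩
        exact ideal_eq_of_maxIn_subset hirr htr hJ hJI (hSeq ▸ hSJ)
      · rintro rfl
        exact ⟨hI, hS.trans (maxIn_subset _), Finset.Subset.refl _⟩
    rw [hset, Finset.sum_singleton, hSeq]
  intro k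
  induction k with
  | zero =>
    intro I S hI hS hSne hcard
    have h1 : S ⊆ I := hS.trans (maxIn_subset I)
    have h2 : S = I := Finset.eq_of_subset_of_card_le h1 (by omega)
    exact base I S hI hS (by rw [h2]; exact maxIn_subset I)
  | succ k ih =>
    intro I S hI hS hSne hcard
    by_cases hfull : maxIn c I ⊆ S
    · exact base I S hI hS hfull
    · obtain ⟨y, hyM, hyS⟩ := Finset.not_subset.1 hfull
      have hyI : y ∈ I := maxIn_subset I hyM
      have hins : insert y S ⊆ maxIn c I := Finset.insert_subset hyM hS
      have hinscard : (insert y S).card = S.card + 1 := Finset.card_insert_of_notMem hyS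
      have hSltI : S.card + 1 ≤ I.card := by
        have := Finset.card_le_card (hins.trans (maxIn_subset I))
        omega
      -- the two sub-sums
      have hIH2 : ‖lam t I.card (S.card + 1)‖ ≤
          ∑ J ∈ Finset.univ.filter
            (fun J : Finset (Fin n) => isIdeal c J ∧ insert y S ⊆ J ∧ J ⊆ I),
            ‖lam t J.card (maxIn c J).card‖ := by
        have := ih I (insert y S) hI hins ⟨y, Finset.mem_insert_self y S⟩ (by omega)
        rwa [hinscard] at this
      have herase : isIdeal c (I.erase y) := erase_ideal hI hyM
      have hSer : S ⊆ maxIn c (I.erase y) := by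
        intro s hsS
        have hs := hS hsS
        rw [mem_maxIn] at hs ⊢
        refine ⟨Finset.mem_erase.2 ⟨fun h => hyS (h ▸ hsS), hs.1⟩,
          fun j hj => hs.2 j (Finset.mem_of_mem_erase hj)⟩
      have hecard : (I.erase y).card = I.card - 1 := Finset.card_erase_of_mem hyI
      have hIH1 : ‖lam t (I.card - 1) S.card‖ ≤
          ∑ J ∈ Finset.univ.filter
            (fun J : Finset (Fin n) => isIdeal c J ∧ S ⊆ J ∧ J ⊆ I.erase y),
            ‖lam t J.card (maxIn c J).card‖ := by
        have := ih (I.erase y) S herase hSer hSne (by omega)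
        rwa [hecard] at this
      -- split the big sum
      have hsplit :
          (∑ J ∈ Finset.univ.filter
            (fun J : Finset (Fin n) => isIdeal c J ∧ insert y S ⊆ J ∧ J ⊆ I),
            ‖lam t J.card (maxIn c J).card‖) +
          (∑ J ∈ Finset.univ.filter
            (fun J : Finset (Fin n) => isIdeal c J ∧ S ⊆ J ∧ J ⊆ I.erase y),
            ‖lam t J.card (maxIn c J).card‖) =
          ∑ J ∈ Finset.univ.filter (fun J : Finset (Fin n) => isIdeal c J ∧ S ⊆ J ∧ J ⊆ I),
            ‖lam t J.card (maxIn c J).card‖ := by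
        rw [← Finset.sum_filter_add_sum_filter_not
          (Finset.univ.filter (fun J : Finset (Fin n) => isIdeal c J ∧ S ⊆ J ∧ J ⊆ I))
          (fun J => y ∈ J)]
        congr 1
        · congr 1
          ext J
          simp only [Finset.mem_filter, Finset.mem_univ, true_and,
            Finset.insert_subset_iff]
          tauto
        · congr 1
          ext J
          simp only [Finset.mem_filter, Finset.mem_univ, true_and,
            Finset.subset_erase]
          tauto
      have htri : ‖lam t I.card S.card‖ ≤
          ‖lam t I.card (S.card + 1)‖ + ‖lam t (I.card - 1) S.card‖ := by
        rw [lam_rec t I.card S.card (by omega)]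
        calc ‖lam t (I.card - 1) S.card + lam t I.card (S.card + 1)‖
            ≤ ‖lam t (I.card - 1) S.card‖ + ‖lam t I.card (S.card + 1)‖ :=
              norm_add_le _ _
          _ = _ := by ring
      calc ‖lam t I.card S.card‖
          ≤ ‖lam t I.card (S.card + 1)‖ + ‖lam t (I.card - 1) S.card‖ := htri
        _ ≤ _ := by rw [← hsplit]; exact add_le_add hIH2 hIH1

lemma lam_zero (t : ℕ → ℂ) : lam t 0 0 = t 0 := by simp [lam]

lemma Q_lower (t : ℕ → ℂ) (hirr : ∀ i, ¬ c i i) (htr : ∀ i j k, c i j → c j k → c i k) :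
    ∀ (k : ℕ) (K : Finset (Fin n)), isIdeal c K → K.card ≤ k →
      ‖t 0‖ + ∑ w ∈ Finset.Icc 1 K.card, ‖lam t w 1‖ ≤
        ∑ J ∈ Finset.univ.filter (fun J : Finset (Fin n) => isIdeal c J ∧ J ⊆ K),
          ‖lam t J.card (maxIn c J).card‖ := by
  have base : ∀ (K : Finset (Fin n)), K = ∅ →
      ‖t 0‖ + ∑ w ∈ Finset.Icc 1 K.card, ‖lam t w 1‖ ≤
        ∑ J ∈ Finset.univ.filter (fun J : Finset (Fin n) => isIdeal c J ∧ J ⊆ K),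
          ‖lam t J.card (maxIn c J).card‖ := by
    rintro K rfl
    have hset : Finset.univ.filter (fun J : Finset (Fin n) => isIdeal c J ∧ J ⊆ (∅ : Finset (Fin n)))
        = {(∅ : Finset (Fin n))} := by
      ext J
      simp only [Finset.mem_filter, Finset.mem_univ, true_and, Finset.mem_singleton,
        Finset.subset_empty]
      constructor
      · rintro ⟨_, h⟩; exact h
      · rintro rfl; exact ⟨fun j hj => by simp at hj, rfl⟩
    rw [hset, Finset.sum_singleton]
    simp [maxIn, lam_zero]
  intro k
  induction k with
  | zero =>
    intro K hK hcard
    exact base K (Finset.card_eq_zero.1 (by omega))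
  | succ k ih =>
    intro K hK hcard
    rcases Finset.eq_empty_or_nonempty K with rfl | hKne
    · exact base ∅ rfl
    · obtain ⟨y, hyM⟩ := maxIn_nonempty hirr htr hKne
      have hyK : y ∈ K := maxIn_subset K hyM
      have hKpos : 1 ≤ K.card := Finset.card_pos.2 hKne
      have herase : isIdeal c (K.erase y) := erase_ideal hK hyM
      have hecard : (K.erase y).card = K.card - 1 := Finset.card_erase_of_mem hyK
      have hIH : ‖t 0‖ + ∑ w ∈ Finset.Icc 1 (K.card - 1), ‖lam t w 1‖ ≤
          ∑ J ∈ Finset.univ.filter (fun J : Finset (Fin n) => isIdeal c J ∧ J ⊆ K.erase y),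
            ‖lam t J.card (maxIn c J).card‖ := by
        have := ih (K.erase y) herase (by omega)
        rwa [hecard] at this
      have hkey : ‖lam t K.card 1‖ ≤
          ∑ J ∈ Finset.univ.filter
            (fun J : Finset (Fin n) => isIdeal c J ∧ {y} ⊆ J ∧ J ⊆ K),
            ‖lam t J.card (maxIn c J).card‖ := by
        have := key_lemma t hirr htr K.card K {y} hK (Finset.singleton_subset_iff.2 hyM)
          ⟨y, Finset.mem_singleton_self y⟩ (by simp only [Finset.card_singleton]; omega)
        simpa using this
      have hsplit :
          (∑ J ∈ Finset.univ.filter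
            (fun J : Finset (Fin n) => isIdeal c J ∧ {y} ⊆ J ∧ J ⊆ K),
            ‖lam t J.card (maxIn c J).card‖) +
          (∑ J ∈ Finset.univ.filter
            (fun J : Finset (Fin n) => isIdeal c J ∧ J ⊆ K.erase y),
            ‖lam t J.card (maxIn c J).card‖) =
          ∑ J ∈ Finset.univ.filter (fun J : Finset (Fin n) => isIdeal c J ∧ J ⊆ K),
            ‖lam t J.card (maxIn c J).card‖ := by
        rw [← Finset.sum_filter_add_sum_filter_not
          (Finset.univ.filter (fun J : Finset (Fin n) => isIdeal c J ∧ J ⊆ K))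
          (fun J => y ∈ J)]
        congr 1
        · congr 1
          ext J
          simp only [Finset.mem_filter, Finset.mem_univ, true_and,
            Finset.singleton_subset_iff]
          tauto
        · congr 1
          ext J
          simp only [Finset.mem_filter, Finset.mem_univ, true_and,
            Finset.subset_erase]
          tauto
      have hsum : ∑ w ∈ Finset.Icc 1 K.card, ‖lam t w 1‖ =
          (∑ w ∈ Finset.Icc 1 (K.card - 1), ‖lam t w 1‖) +
            ‖lam t K.card 1‖ := by
        obtain ⟨m, hm⟩ : ∃ m, K.card = m + 1 := ⟨K.card - 1, by omega⟩
        rw [hm]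
        rw [Finset.sum_Icc_succ_top (by omega : 1 ≤ m + 1)]
        simp
      rw [← hsplit, hsum]
      calc ‖t 0‖ + ((∑ w ∈ Finset.Icc 1 (K.card - 1), ‖lam t w 1‖) +
            ‖lam t K.card 1‖)
          = (‖t 0‖ + ∑ w ∈ Finset.Icc 1 (K.card - 1), ‖lam t w 1‖) +
            ‖lam t K.card 1‖ := by ring
        _ ≤ _ := by
            rw [add_comm (∑ J ∈ Finset.univ.filter
              (fun J : Finset (Fin n) => isIdeal c J ∧ {y} ⊆ J ∧ J ⊆ K), _)]
            exact add_le_add hIH hkey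


def seg (n k : ℕ) : Finset (Fin n) := Finset.univ.filter (fun i : Fin n => (i : ℕ) < k)

lemma seg_card {n k : ℕ} (hk : k ≤ n) : (seg n k).card = k := by
  have : seg n k = Finset.map (Fin.castLEEmb hk) Finset.univ := by
    ext i
    simp only [seg, Finset.mem_filter, Finset.mem_univ, true_and, Finset.mem_map,
      Fin.castLEEmb_apply]
    constructor
    · intro h; exact ⟨⟨i, h⟩, rfl⟩
    · rintro ⟨j, -, rfl⟩; exact j.2
  rw [this, Finset.card_map, Finset.card_univ, Fintype.card_fin]

lemma seg_ideal {n k : ℕ} : isIdeal (fun i j : Fin n => (i : ℕ) < (j : ℕ)) (seg n k) := by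
  intro j hj i hij
  simp only [seg, Finset.mem_filter, Finset.mem_univ, true_and] at *
  omega

lemma ideal_eq_seg {n : ℕ} {I : Finset (Fin n)}
    (hI : isIdeal (fun i j : Fin n => (i : ℕ) < (j : ℕ)) I) : I = seg n I.card := by
  have hsub : I ⊆ seg n I.card := by
    intro i hi
    have h1 : seg n ((i : ℕ) + 1) ⊆ I := by
      intro j hj
      simp only [seg, Finset.mem_filter, Finset.mem_univ, true_and] at hj
      rcases Nat.lt_succ_iff_lt_or_eq.1 hj with h | h
      · exact hI i hi j h
      · rwa [show j = i from Fin.ext h]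
    have h2 : (i : ℕ) + 1 ≤ I.card := by
      have := Finset.card_le_card h1
      rwa [seg_card (by omega)] at this
    simp only [seg, Finset.mem_filter, Finset.mem_univ, true_and]
    omega
  by_contra hne
  have hss : I ⊂ seg n I.card := Finset.ssubset_iff_subset_ne.2 ⟨hsub, hne⟩
  have := Finset.card_lt_card hss
  rw [seg_card (by
    have := Finset.card_le_card (Finset.subset_univ I)
    simpa using this)] at this
  omega

lemma maxIn_seg {n k : ℕ} (hk : k < n) :
    maxIn (fun i j : Fin n => (i : ℕ) < (j : ℕ)) (seg n (k + 1)) = {(⟨k, hk⟩ : Fin n)} := by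
  ext i
  simp only [maxIn, seg, Finset.mem_filter, Finset.mem_univ, true_and, Finset.mem_singleton,
    Fin.ext_iff]
  constructor
  · rintro ⟨h1, h2⟩
    have h3 : ¬ (i : ℕ) < k := h2 ⟨k, hk⟩ (Nat.lt_succ_self k)
    omega
  · intro h
    exact ⟨by omega, fun j hj => by omega⟩

lemma Qval_chain (t : ℕ → ℂ) (n : ℕ) :
    Qval t (fun i j : Fin n => (i : ℕ) < (j : ℕ))
      = ‖t 0‖ + ∑ w ∈ Finset.Icc 1 n, ‖lam t w 1‖ := by
  have hfilter : Finset.univ.filter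
      (fun I : Finset (Fin n) => isIdeal (fun i j : Fin n => (i : ℕ) < (j : ℕ)) I)
      = (Finset.range (n + 1)).image (seg n) := by
    ext I
    simp only [Finset.mem_filter, Finset.mem_univ, true_and, Finset.mem_image,
      Finset.mem_range]
    constructor
    · intro hI
      refine ⟨I.card, ?_, (ideal_eq_seg hI).symm⟩
      have := Finset.card_le_card (Finset.subset_univ I)
      simp at this
      omega
    · rintro ⟨k, hk, rfl⟩
      exact seg_ideal
  rw [Qval, hfilter, Finset.sum_image (fun k hk l hl h => by
    rw [Finset.mem_coe, Finset.mem_range] at hk hl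
    have h1 := seg_card (n := n) (k := k) (by omega)
    have h2 := seg_card (n := n) (k := l) (by omega)
    rw [← h1, ← h2, h])]
  rw [Finset.sum_range_succ']
  have h0 : seg n 0 = (∅ : Finset (Fin n)) := by
    ext i; simp [seg]
  have hterm0 : ‖lam t (seg n 0).card
      (maxIn (fun i j : Fin n => (i : ℕ) < (j : ℕ)) (seg n 0)).card‖ = ‖t 0‖ := by
    rw [h0]
    simp [maxIn, lam_zero]
  rw [hterm0]
  rw [add_comm]
  congr 1
  rw [← Finset.Ico_add_one_right_eq_Icc, Finset.sum_Ico_eq_sum_range]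
  refine Finset.sum_congr (by simp) fun i hi => ?_
  rw [Finset.mem_range] at hi
  have hi' : i < n := by omega
  rw [seg_card (by omega), maxIn_seg hi', Finset.card_singleton,
    show 1 + i = i + 1 from by omega]

lemma Qval_lower (t : ℕ → ℂ) {n : ℕ} (c : Fin n → Fin n → Prop)
    (hirr : ∀ i, ¬ c i i) (htr : ∀ i j k, c i j → c j k → c i k) :
    ‖t 0‖ + ∑ w ∈ Finset.Icc 1 n, ‖lam t w 1‖ ≤ Qval t c := by
  have h := Q_lower t hirr htr n Finset.univ (fun j _ i _ => Finset.mem_univ i) (by simp)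
  have hcard : (Finset.univ : Finset (Fin n)).card = n := by simp
  rw [hcard] at h
  have heq : Qval t c = ∑ J ∈ Finset.univ.filter
      (fun J : Finset (Fin n) => isIdeal c J ∧ J ⊆ Finset.univ),
      ‖lam t J.card (maxIn c J).card‖ := by
    rw [Qval]
    congr 1
    ext J
    simp [Finset.subset_univ]
  rw [heq]
  exact h

end Helpers

/-- Q(c) ≥ |t_0| + Σ_{ϖ=1}^{n} |λ(ϖ,1)| for every (strict) partial order c
on a set of cardinality n, the n-chain attains the bound, and hence if λ(n,0) ≠ 0 the
minimum of ζ(c) over all such partial orders is ζ_n^c, attained at the chain. -/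
theorem statement_7 (t : ℕ → ℂ) (n : ℕ) :
    (∀ c : Fin n → Fin n → Prop, (∀ i, ¬ c i i) → (∀ i j k, c i j → c j k → c i k) →
      ‖t 0‖ + ∑ w ∈ Finset.Icc 1 n, ‖lam t w 1‖ ≤ Qval t c) ∧
    Qval t (fun i j : Fin n => (i : ℕ) < (j : ℕ))
      = ‖t 0‖ + ∑ w ∈ Finset.Icc 1 n, ‖lam t w 1‖ ∧
    (lam t n 0 ≠ 0 →
      IsLeast {x : ℝ | ∃ c : Fin n → Fin n → Prop,
          (∀ i, ¬ c i i) ∧ (∀ i j k, c i j → c j k → c i k) ∧ x = zeta t c}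
        (zetaC t n)) := by
  refine ⟨fun c hirr htr => Qval_lower t c hirr htr, Qval_chain t n, fun h0 => ?_⟩
  have habs : 0 < ‖lam t n 0‖ := norm_pos_iff.2 h0
  constructor
  · refine ⟨fun i j : Fin n => (i : ℕ) < (j : ℕ), fun i => lt_irrefl _,
      fun i j k hij hjk => Nat.lt_trans hij hjk, ?_⟩
    rw [zeta, zetaC, Qval_chain t n]
  · rintro x ⟨c, hirr, htr, rfl⟩
    rw [zeta, zetaC]
    have h1 := Qval_lower t c hirr htr
    exact sub_le_sub_right (by gcongr) 1

end
end

section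
/- Suppose t_0 = 1 and λ(n,0) ≠ 0 for all n. Then ζ_n^a = 0 for every n ≥ 1 if and only if t_k is a nonnegative real number for every k. -/
open MeasureTheory Filter Finset

attribute [local instance] Classical.propDecidable

noncomputable section

lemma icc_zero_eq_range (k : ℕ) : Finset.Icc 0 k = Finset.range (k + 1) := by
  ext j; simp [Nat.lt_succ_iff]

lemma lam_zero_eq (t : ℕ → ℂ) (k : ℕ) :
    lam t k 0 = ∑ j ∈ Finset.range (k + 1), (k.choose j : ℂ) * t j := by
  rw [lam, icc_zero_eq_range]
  simp

lemma sameRay_of_norm_sum_eq {f : ℕ → ℂ} {s : Finset ℕ}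
    (h : ‖∑ i ∈ s, f i‖ = ∑ i ∈ s, ‖f i‖) {j : ℕ} (hj : j ∈ s) :
    SameRay ℝ (f j) (∑ i ∈ s, f i) := by
  have hsplit : ∑ i ∈ s, f i = f j + ∑ i ∈ s.erase j, f i :=
    (Finset.add_sum_erase s f hj).symm
  have h1 : ‖∑ i ∈ s.erase j, f i‖ ≤ ∑ i ∈ s.erase j, ‖f i‖ := norm_sum_le _ _
  have h2 : ∑ i ∈ s, ‖f i‖ = ‖f j‖ + ∑ i ∈ s.erase j, ‖f i‖ :=
    (Finset.add_sum_erase s _ hj).symm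
  have hle := norm_add_le (f j) (∑ i ∈ s.erase j, f i)
  have h3 : ‖f j + ∑ i ∈ s.erase j, f i‖ = ‖f j‖ + ‖∑ i ∈ s.erase j, f i‖ := by
    have h4 : ‖f j + ∑ i ∈ s.erase j, f i‖ = ∑ i ∈ s, ‖f i‖ := by rw [← hsplit, h]
    linarith
  have hray : SameRay ℝ (f j) (∑ i ∈ s.erase j, f i) := sameRay_iff_norm_add.2 h3
  rw [hsplit]
  exact (SameRay.refl _).add_right hray

/-- with t_0 = 1 and λ(n,0) ≠ 0 for all n, ζ_n^a = 0 for every n ≥ 1 iff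
every t_k is a nonnegative real number. -/
theorem statement_10 (t : ℕ → ℂ) (ht0 : t 0 = 1) (hlam : ∀ n : ℕ, lam t n 0 ≠ 0) :
    (∀ n : ℕ, 1 ≤ n → zetaA t n = 0) ↔ (∀ k : ℕ, ∃ s : ℝ, 0 ≤ s ∧ t k = (s : ℂ)) := by
  constructor
  · intro h k
    rcases Nat.eq_zero_or_pos k with hk | hk
    · exact ⟨1, zero_le_one, by simp [hk, ht0]⟩
    · have habs : ‖lam t k 0‖ ≠ 0 := by
        simpa using hlam k
      have hz := h k hk
      rw [zetaA, sub_eq_zero, div_eq_one_iff_eq habs] at hz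
      set f : ℕ → ℂ := fun j => (k.choose j : ℂ) * t j with hf
      have hsum : lam t k 0 = ∑ j ∈ Finset.range (k + 1), f j := lam_zero_eq t k
      have hnorm : ‖∑ j ∈ Finset.range (k + 1), f j‖
          = ∑ j ∈ Finset.range (k + 1), ‖f j‖ := by
        rw [← hsum, ← hz]
        refine Finset.sum_congr rfl fun j _ => ?_
        simp [hf]
      have hS : (∑ j ∈ Finset.range (k + 1), f j) ≠ 0 := hsum ▸ hlam k
      have r0 : SameRay ℝ (f 0) (∑ j ∈ Finset.range (k + 1), f j) :=
        sameRay_of_norm_sum_eq hnorm (Finset.mem_range.2 (Nat.succ_pos k))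
      have rk : SameRay ℝ (f k) (∑ j ∈ Finset.range (k + 1), f j) :=
        sameRay_of_norm_sum_eq hnorm (Finset.mem_range.2 (Nat.lt_succ_self k))
      have hf0 : f 0 = 1 := by simp [hf, ht0]
      have hray : SameRay ℝ (f 0) (f k) :=
        r0.trans rk.symm (fun hS0 => absurd hS0 hS)
      obtain ⟨r, hr, hrk⟩ := hray.exists_nonneg_left (by rw [hf0]; exact one_ne_zero)
      refine ⟨r, hr, ?_⟩
      have : f k = t k := by simp [hf]
      rw [← this, ← hrk, hf0]
      simp [Complex.real_smul]
  · intro h n hn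
    choose s hs0 hst using h
    have hnum : ∑ j ∈ Finset.range (n + 1), (n.choose j : ℝ) * ‖t j‖
        = ∑ j ∈ Finset.range (n + 1), (n.choose j : ℝ) * s j := by
      refine Finset.sum_congr rfl fun j _ => ?_
      rw [hst j, Complex.norm_of_nonneg (hs0 j)]
    have hlamval : lam t n 0
        = ((∑ j ∈ Finset.range (n + 1), (n.choose j : ℝ) * s j : ℝ) : ℂ) := by
      rw [lam_zero_eq]
      push_cast
      exact Finset.sum_congr rfl fun j _ => by rw [hst j]
    have hpos : 0 ≤ ∑ j ∈ Finset.range (n + 1), (n.choose j : ℝ) * s j :=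
      Finset.sum_nonneg fun j _ => mul_nonneg (Nat.cast_nonneg _) (hs0 j)
    have habs : ‖lam t n 0‖
        = ∑ j ∈ Finset.range (n + 1), (n.choose j : ℝ) * s j := by
      rw [hlamval, Complex.norm_of_nonneg hpos]
    have hne : ‖lam t n 0‖ ≠ 0 := by
      simpa using hlam n
    rw [zetaA, hnum, ← habs, div_self hne, sub_self]

end
end
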